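/- arXiv:1709.09584 — 7 statements merged into one kernel-verified Lean document; each statement's English description precedes it below -/
import Mathlib

section
/- Let X be a complex normed space and let {x_1,...,x_k} (k ≥ 2) be a subset of the unit sphere of X. Then {x_1,...,x_k} is completely M-orthogonal (i.e. ‖∑ α_j x_j‖ = max_j |α_j| for all complex scalars α_j) if and only if ‖x_1 + ∑_{j=2}^k λ_j x_j‖ = 1 for all λ_2,...,λ_k in the unit circle 𝕋. -/
/-- Every point of the closed unit disc is the average of two points on the circle. -/
lemma half_circle (z : ℂ) (hz : ‖z‖ ≤ 1) :
    ∃ u v : ℂ, ‖u‖ = 1 ∧ ‖v‖ = 1 ∧ z = (u + v) / 2 := by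
  by_cases h : z = 0
  · exact ⟨Complex.I, -Complex.I, by simp, by simp, by simp [h]⟩
  · set c : ℝ := Real.sqrt (1 - ‖z‖ ^ 2) / ‖z‖ with hc
    have hz0 : (0:ℝ) < ‖z‖ := norm_pos_iff.2 h
    have hsq : c ^ 2 = (1 - ‖z‖ ^ 2) / ‖z‖ ^ 2 := by
      rw [hc, div_pow, Real.sq_sqrt (by nlinarith)]
    have hn : ∀ s : ℝ, ‖(1 + (s:ℂ) * Complex.I) * z‖ ^ 2 = (1 + s ^ 2) * ‖z‖ ^ 2 := by
      intro s
      rw [norm_mul, mul_pow]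
      congr 1
      rw [Complex.sq_norm]
      simp [Complex.normSq_apply]
      ring
    have key : ∀ s : ℝ, s ^ 2 = c ^ 2 → ‖(1 + (s:ℂ) * Complex.I) * z‖ = 1 := by
      intro s hs
      have h1 : ‖(1 + (s:ℂ) * Complex.I) * z‖ ^ 2 = 1 := by
        rw [hn s, hs, hsq]
        have h' : ‖z‖ ≠ 0 := by
          exact ne_of_gt hz0
        field_simp
        ring
      nlinarith [norm_nonneg ((1 + (s:ℂ) * Complex.I) * z)]
    refine ⟨(1 + (c:ℂ) * Complex.I) * z, (1 + ((-c : ℝ):ℂ) * Complex.I) * z,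
      key c rfl, key (-c) (by ring), ?_⟩
    push_cast
    ring
lemma upper_aux {X : Type*} [NormedAddCommGroup X] [NormedSpace ℂ X]
    {n : ℕ} (x : Fin n → X)
    (H : ∀ μ : Fin n → ℂ, (∀ j, ‖μ j‖ = 1) → ‖∑ j, μ j • x j‖ = 1) :
    ∀ m (β : Fin n → ℂ), (∀ j, ‖β j‖ ≤ 1) →
      (Finset.univ.filter (fun j => ‖β j‖ ≠ 1)).card ≤ m →
      ‖∑ j, β j • x j‖ ≤ 1 := by
  intro m
  induction m with
  | zero =>
    intro β hβ hcard
    refine le_of_eq (H β fun j => ?_)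
    by_contra hj
    have hmem : j ∈ Finset.univ.filter (fun j => ‖β j‖ ≠ 1) :=
      Finset.mem_filter.2 ⟨Finset.mem_univ j, hj⟩
    have := Finset.card_pos.2 ⟨j, hmem⟩
    omega
  | succ m ih =>
    intro β hβ hcard
    by_cases he : ∀ j, ‖β j‖ = 1
    · exact le_of_eq (H β he)
    · push_neg at he
      obtain ⟨i, hi⟩ := he
      obtain ⟨u, v, hu, hv, huv⟩ := half_circle (β i) (hβ i)
      set β₁ := Function.update β i u with hβ₁
      set β₂ := Function.update β i v with hβ₂
      have key : ∀ j, β j • x j = (2:ℂ)⁻¹ • (β₁ j • x j + β₂ j • x j) := by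
        intro j
        by_cases hj : j = i
        · subst hj
          rw [hβ₁, hβ₂, Function.update_self, Function.update_self, huv]
          module
        · rw [hβ₁, hβ₂, Function.update_of_ne hj, Function.update_of_ne hj]
          module
      have hsum : ∑ j, β j • x j
          = (2:ℂ)⁻¹ • (∑ j, β₁ j • x j) + (2:ℂ)⁻¹ • (∑ j, β₂ j • x j) := by
        rw [Finset.sum_congr rfl fun j _ => key j, ← Finset.smul_sum,
          Finset.sum_add_distrib, smul_add]
      have hif : i ∈ Finset.univ.filter (fun j => ‖β j‖ ≠ 1) :=
        Finset.mem_filter.2 ⟨Finset.mem_univ i, hi⟩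
      have hsub : ∀ (w : ℂ), ‖w‖ = 1 →
          (Finset.univ.filter (fun j => ‖Function.update β i w j‖ ≠ 1)).card ≤ m := by
        intro w hw
        have hss : Finset.univ.filter (fun j => ‖Function.update β i w j‖ ≠ 1)
            ⊆ (Finset.univ.filter (fun j => ‖β j‖ ≠ 1)).erase i := by
          intro j hj
          rw [Finset.mem_filter] at hj
          have hji : j ≠ i := by
            rintro rfl
            exact hj.2 (by rw [Function.update_self]; exact hw)
          refine Finset.mem_erase.2 ⟨hji, Finset.mem_filter.2 ⟨Finset.mem_univ j, ?_⟩⟩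
          rw [Function.update_of_ne hji] at hj
          exact hj.2
        have := Finset.card_le_card hss
        have h2 := Finset.card_erase_of_mem hif
        have h3 := Finset.card_pos.2 ⟨i, hif⟩
        omega
      have hb : ∀ (w : ℂ), ‖w‖ = 1 → ∀ j, ‖Function.update β i w j‖ ≤ 1 := by
        intro w hw j
        by_cases hj : j = i
        · subst hj; rw [Function.update_self, hw]
        · rw [Function.update_of_ne hj]; exact hβ j
      have h1 := ih β₁ (hb u hu) (hsub u hu)
      have h2 := ih β₂ (hb v hv) (hsub v hv)
      calc ‖∑ j, β j • x j‖
          ≤ ‖(2:ℂ)⁻¹ • (∑ j, β₁ j • x j)‖ + ‖(2:ℂ)⁻¹ • (∑ j, β₂ j • x j)‖ := by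
            rw [hsum]; exact norm_add_le _ _
        _ ≤ (2:ℝ)⁻¹ * 1 + (2:ℝ)⁻¹ * 1 := by
            rw [norm_smul, norm_smul]
            gcongr <;> simp
        _ = 1 := by norm_num

lemma upper_bound {X : Type*} [NormedAddCommGroup X] [NormedSpace ℂ X]
    {k : ℕ} (x : Fin (k + 2) → X)
    (H : ∀ μ : Fin (k + 2) → ℂ, (∀ j, ‖μ j‖ = 1) → ‖∑ j, μ j • x j‖ = 1)
    (α : Fin (k + 2) → ℂ) :
    ‖∑ j, α j • x j‖ ≤ Finset.univ.sup' Finset.univ_nonempty (fun j => ‖α j‖) := by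
  set M : ℝ := Finset.univ.sup' Finset.univ_nonempty (fun j => ‖α j‖) with hM
  have hle : ∀ j, ‖α j‖ ≤ M := by
    intro j; rw [hM]; exact Finset.le_sup' (fun j => ‖α j‖) (Finset.mem_univ j)
  rcases eq_or_lt_of_le (le_trans (norm_nonneg (α 0)) (hle 0)) with h0 | h0
  · have hz : ∀ j, α j = 0 := by
      intro j
      have h1 := hle j
      rw [← h0] at h1
      exact norm_le_zero_iff.1 h1
    simp [hz, ← h0]
  · set β : Fin (k + 2) → ℂ := fun j => (M : ℂ)⁻¹ * α j with hβ
    have hβle : ∀ j, ‖β j‖ ≤ 1 := by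
      intro j
      rw [hβ]
      simp only [norm_mul, norm_inv, Complex.norm_real, Real.norm_eq_abs,
        abs_of_pos h0]
      rw [inv_mul_le_iff₀ h0, mul_one]
      exact hle j
    have hub := upper_aux x H (k + 2) β hβle (le_trans (Finset.card_le_univ _)
      (by simp))
    have hsum : ∑ j, α j • x j = (M : ℂ) • ∑ j, β j • x j := by
      rw [Finset.smul_sum]
      refine Finset.sum_congr rfl fun j _ => ?_
      rw [hβ, smul_smul, mul_inv_cancel_left₀]
      exact_mod_cast ne_of_gt h0
    rw [hsum, norm_smul]
    calc ‖(M:ℂ)‖ * ‖∑ j, β j • x j‖ ≤ ‖(M:ℂ)‖ * 1 := by gcongr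
      _ = M := by simp [abs_of_pos h0]

theorem stmt0 {X : Type*} [NormedAddCommGroup X] [NormedSpace ℂ X]
    (k : ℕ) (x : Fin (k + 2) → X) (hx : ∀ j, ‖x j‖ = 1) :
    (∀ α : Fin (k + 2) → ℂ,
        ‖∑ j, α j • x j‖ =
          Finset.univ.sup' Finset.univ_nonempty (fun j => ‖α j‖ * ‖x j‖)) ↔
      (∀ lam : Fin (k + 2) → ℂ, lam 0 = 1 → (∀ j, ‖lam j‖ = 1) →
        ‖∑ j, lam j • x j‖ = 1) := by
  have hsup : ∀ α : Fin (k + 2) → ℂ,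
      Finset.univ.sup' Finset.univ_nonempty (fun j => ‖α j‖ * ‖x j‖)
        = Finset.univ.sup' Finset.univ_nonempty (fun j => ‖α j‖) := by
    intro α
    exact Finset.sup'_congr _ rfl fun j _ => by rw [hx, mul_one]
  constructor
  · intro h lam h0 h1
    rw [h lam, hsup]
    have hone : ∀ j : Fin (k + 2), ‖lam j‖ = 1 := h1
    apply le_antisymm
    · exact Finset.sup'_le _ _ fun j _ => le_of_eq (hone j)
    · exact Finset.le_sup'_of_le _ (Finset.mem_univ 0) (le_of_eq (hone 0).symm)
  · intro h α
    rw [hsup]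
    -- derive full unimodular hypothesis
    have H : ∀ μ : Fin (k + 2) → ℂ, (∀ j, ‖μ j‖ = 1) → ‖∑ j, μ j • x j‖ = 1 := by
      intro μ hμ
      have hμ0 : μ 0 ≠ 0 := by
        intro hz; have := hμ 0; rw [hz] at this; simp at this
      set lam : Fin (k + 2) → ℂ := fun j => (μ 0)⁻¹ * μ j with hlam
      have h0 : lam 0 = 1 := inv_mul_cancel₀ hμ0
      have h1 : ∀ j, ‖lam j‖ = 1 := by
        intro j
        rw [hlam]
        simp only [norm_mul, norm_inv, hμ]
        norm_num
      have := h lam h0 h1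
      have hsum : ∑ j, lam j • x j = (μ 0)⁻¹ • ∑ j, μ j • x j := by
        rw [Finset.smul_sum]
        exact Finset.sum_congr rfl fun j _ => by rw [hlam, smul_smul]
      rw [hsum, norm_smul, norm_inv, hμ 0] at this
      simpa using this
    refine le_antisymm (upper_bound x H α) ?_
    -- lower bound
    obtain ⟨i, -, hi⟩ := Finset.exists_mem_eq_sup' Finset.univ_nonempty
      (fun j => ‖α j‖)
    set β : Fin (k + 2) → ℂ := fun j => if j = i then -α j else α j with hβ
    have hβn : ∀ j, ‖β j‖ = ‖α j‖ := by
      intro j; rw [hβ]; by_cases hj : j = i <;> simp [hj]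
    have hβsup : Finset.univ.sup' Finset.univ_nonempty (fun j => ‖β j‖)
        = Finset.univ.sup' Finset.univ_nonempty (fun j => ‖α j‖) :=
      Finset.sup'_congr _ rfl fun j _ => hβn j
    have hub := upper_bound x H β
    rw [hβsup] at hub
    have hdiff : (∑ j, α j • x j) - (∑ j, β j • x j) = (2 * α i) • x i := by
      rw [← Finset.sum_sub_distrib]
      rw [Finset.sum_eq_single i]
      · rw [hβ]; simp; module
      · intro j _ hj
        rw [hβ]; simp [hj]
      · intro hnot; exact absurd (Finset.mem_univ i) hnot
    have h2 : ‖(2 * α i) • x i‖ = 2 * ‖α i‖ := by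
      rw [norm_smul, hx, mul_one, norm_mul]
      norm_num
    have := norm_sub_le (∑ j, α j • x j) (∑ j, β j • x j)
    rw [hdiff, h2] at this
    rw [hi]
    linarith
end

section
/- Let X be a complex normed space and let {x_1,...,x_k} (k ≥ 2) be a subset of the unit sphere of X. Then {x_1,...,x_k} is completely M-orthogonal if and only if ‖∑_{j=1}^k λ_j x_j‖ = 1 for every choice of λ_1,...,λ_k in the unit circle 𝕋. -/
open Finset

private lemma half_uni (c : ℂ) (h : ‖c‖ ≤ 1) :
    ∃ a b : ℂ, ‖a‖ = 1 ∧ ‖b‖ = 1 ∧ a + b = 2 * c := by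
  rcases eq_or_ne c 0 with rfl | hc
  · exact ⟨Complex.I, -Complex.I, by simp, by simp, by ring⟩
  · set r : ℝ := ‖c‖ with hr
    have hr0 : 0 < r := norm_pos_iff.mpr hc
    set s : ℝ := Real.sqrt (1 - r ^ 2) with hs
    have hs2 : s ^ 2 = 1 - r ^ 2 := Real.sq_sqrt (by nlinarith)
    set u : ℂ := c / (r : ℂ) with hu
    have hun : ‖u‖ = 1 := by
      rw [hu, norm_div, Complex.norm_real, Real.norm_of_nonneg hr0.le, ← hr,
        div_self hr0.ne']
    have hkey : ∀ t : ℝ, ‖(r : ℂ) + t * Complex.I‖ = Real.sqrt (r ^ 2 + t ^ 2) := by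
      intro t
      rw [Complex.norm_add_mul_I]
    have hone : ∀ t : ℝ, t ^ 2 = s ^ 2 → ‖(r : ℂ) + t * Complex.I‖ = 1 := by
      intro t ht
      rw [hkey t, ht, hs2, show r ^ 2 + (1 - r ^ 2) = 1 by ring, Real.sqrt_one]
    refine ⟨((r : ℂ) + s * Complex.I) * u, ((r : ℂ) + (-s : ℝ) * Complex.I) * u, ?_, ?_, ?_⟩
    · rw [norm_mul, hun, hone s rfl, mul_one]
    · rw [norm_mul, hun, hone (-s) (by ring), mul_one]
    · have : (r : ℂ) ≠ 0 := by
        exact_mod_cast hr0.ne'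
      push_cast
      field_simp [hu]
      rw [hu, div_mul_eq_mul_div, div_eq_iff this]
      ring

private lemma ub_aux {X : Type*} [NormedAddCommGroup X] [NormedSpace ℂ X]
    {n : ℕ} (x : Fin n → X)
    (H : ∀ lam : Fin n → ℂ, (∀ j, ‖lam j‖ = 1) → ‖∑ j, lam j • x j‖ = 1)
    (β : Fin n → ℂ) (hβ : ∀ j, ‖β j‖ ≤ 1) : ‖∑ j, β j • x j‖ ≤ 1 := by
  choose a b ha hb hab using fun j => half_uni (β j) (hβ j)
  have key : (2 : ℂ) • ∑ j, β j • x j = (∑ j, a j • x j) + ∑ j, b j • x j := by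
    rw [Finset.smul_sum, ← Finset.sum_add_distrib]
    refine Finset.sum_congr rfl fun j _ => ?_
    rw [smul_smul, ← add_smul, hab j]
  have h2 : ‖(2 : ℂ) • ∑ j, β j • x j‖ = 2 * ‖∑ j, β j • x j‖ := by
    rw [norm_smul]
    norm_num
  have h3 : ‖(∑ j, a j • x j) + ∑ j, b j • x j‖ ≤ 2 := by
    calc ‖(∑ j, a j • x j) + ∑ j, b j • x j‖ ≤ ‖∑ j, a j • x j‖ + ‖∑ j, b j • x j‖ :=
          norm_add_le _ _
      _ = 2 := by rw [H a ha, H b hb]; norm_num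
  rw [key] at h2
  linarith [h2 ▸ h3]

private lemma key_aux {X : Type*} [NormedAddCommGroup X] [NormedSpace ℂ X]
    {n : ℕ} (x : Fin n → X)
    (H : ∀ lam : Fin n → ℂ, (∀ j, ‖lam j‖ = 1) → ‖∑ j, lam j • x j‖ = 1)
    (f : X →L[ℂ] ℂ) (hf : ‖f‖ ≤ 1) (i : Fin n) (αi : ℂ) (hαi : ‖αi‖ = 1)
    (hfi : f (αi • x i) = 1) :
    ∀ A : Finset (Fin n), i ∉ A → ∀ β : Fin n → ℂ, β i = αi → (∀ j, ‖β j‖ ≤ 1) →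
      (∀ j, j ≠ i → j ∉ A → ‖β j‖ = 1) → f (∑ j, β j • x j) = 1 := by
  intro A
  induction A using Finset.induction_on with
  | empty =>
    intro _ β hβi hβle hβuni
    set w : X := ∑ j ∈ Finset.univ.erase i, β j • x j with hw
    have hsum : ∑ j, β j • x j = αi • x i + w := by
      rw [hw, ← Finset.add_sum_erase _ _ (Finset.mem_univ i), hβi]
    have claim : ∀ z : ℂ, ‖z‖ = 1 → ‖αi • x i + z • w‖ = 1 := by
      intro z hz
      set γ : Fin n → ℂ := fun j => if j = i then αi else z * β j with hγ
      have hrepr : αi • x i + z • w = ∑ j, γ j • x j := by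
        rw [← Finset.add_sum_erase _ _ (Finset.mem_univ i)]
        congr 1
        · simp [hγ]
        · rw [hw, Finset.smul_sum]
          refine Finset.sum_congr rfl fun j hj => ?_
          have hji : j ≠ i := (Finset.mem_erase.mp hj).1
          simp [hγ, hji, smul_smul]
      rw [hrepr]
      apply H
      intro j
      by_cases hji : j = i
      · simp [hγ, hji, hαi]
      · simp only [hγ, if_neg hji, norm_mul, hz, hβuni j hji (Finset.notMem_empty j), mul_one]
    have fw0 : f w = 0 := by
      by_contra h0
      have hfw : 0 < ‖f w‖ := norm_pos_iff.mpr h0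
      set z : ℂ := (‖f w‖ : ℂ) / f w with hz
      have hz1 : ‖z‖ = 1 := by
        rw [hz, norm_div, Complex.norm_real, Real.norm_of_nonneg hfw.le,
          div_self hfw.ne']
      have hzfw : z * f w = (‖f w‖ : ℂ) := by
        rw [hz]; field_simp
      have hval : f (αi • x i + z • w) = 1 + (‖f w‖ : ℂ) := by
        rw [map_add, hfi, map_smul, smul_eq_mul, hzfw]
      have hle : ‖f (αi • x i + z • w)‖ ≤ 1 := by
        calc ‖f (αi • x i + z • w)‖ ≤ ‖f‖ * ‖αi • x i + z • w‖ := f.le_opNorm _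
          _ ≤ 1 * 1 := by
              apply mul_le_mul hf (le_of_eq (claim z hz1)) (norm_nonneg _) zero_le_one
          _ = 1 := by norm_num
      rw [hval] at hle
      have : ‖(1 : ℂ) + (‖f w‖ : ℂ)‖ = 1 + ‖f w‖ := by
        rw [show (1 : ℂ) + (‖f w‖ : ℂ) = ((1 + ‖f w‖ : ℝ) : ℂ) by push_cast; ring,
          Complex.norm_real, Real.norm_of_nonneg (by linarith)]
      rw [this] at hle
      linarith
    rw [hsum, map_add, hfi, fw0, add_zero]
  | @insert j0 A hj0A ih =>
    intro hiA' β hβi hβle hβuni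
    have hij0 : i ≠ j0 := fun h => hiA' (h ▸ Finset.mem_insert_self j0 A)
    have hiA : i ∉ A := fun h => hiA' (Finset.mem_insert_of_mem h)
    set v : X := ∑ j ∈ Finset.univ.erase j0, β j • x j with hv
    have hval : ∀ z : ℂ, ‖z‖ = 1 → f v + z * f (x j0) = 1 := by
      intro z hz
      have happ := ih hiA (Function.update β j0 z) ?_ ?_ ?_
      · have hrepr : ∑ j, Function.update β j0 z j • x j = z • x j0 + v := by
          rw [← Finset.add_sum_erase _ _ (Finset.mem_univ j0)]
          congr 1
          · rw [Function.update_self]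
          · rw [hv]
            refine Finset.sum_congr rfl fun j hj => ?_
            rw [Function.update_of_ne (Finset.mem_erase.mp hj).1]
        rw [hrepr, map_add, map_smul, smul_eq_mul] at happ
        linear_combination happ
      · rw [Function.update_of_ne hij0]
        exact hβi
      · intro j
        by_cases hjj : j = j0
        · subst hjj; rw [Function.update_self]; exact le_of_eq hz
        · rw [Function.update_of_ne hjj]; exact hβle j
      · intro j hji hjA
        by_cases hjj : j = j0
        · subst hjj; rw [Function.update_self]; exact hz
        · rw [Function.update_of_ne hjj]
          exact hβuni j hji (fun h => (Finset.mem_insert.mp h).elim hjj hjA)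
    have h1 := hval 1 (by norm_num)
    have h2 := hval (-1) (by norm_num)
    have fx0 : f (x j0) = 0 := by
      have h3 : (2 : ℂ) * f (x j0) = 0 := by linear_combination h1 - h2
      simpa using h3
    have fv : f v = 1 := by linear_combination h1 - fx0
    have hrepr2 : ∑ j, β j • x j = β j0 • x j0 + v := by
      rw [hv, ← Finset.add_sum_erase _ _ (Finset.mem_univ j0)]
    rw [hrepr2, map_add, map_smul, smul_eq_mul, fx0, mul_zero, zero_add, fv]

theorem stmt1 {X : Type*} [NormedAddCommGroup X] [NormedSpace ℂ X]
    (k : ℕ) (x : Fin (k + 2) → X) (hx : ∀ j, ‖x j‖ = 1) :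
    (∀ α : Fin (k + 2) → ℂ,
        ‖∑ j, α j • x j‖ =
          Finset.univ.sup' Finset.univ_nonempty (fun j => ‖α j‖ * ‖x j‖)) ↔
      (∀ lam : Fin (k + 2) → ℂ, (∀ j, ‖lam j‖ = 1) →
        ‖∑ j, lam j • x j‖ = 1) := by
  constructor
  · intro h lam hlam
    rw [h lam]
    have : (fun j => ‖lam j‖ * ‖x j‖) = fun _ : Fin (k + 2) => (1 : ℝ) := by
      funext j; rw [hlam j, hx j, one_mul]
    rw [this]
    exact Finset.sup'_const _ 1
  · intro H α
    obtain ⟨i, -, hi⟩ := Finset.exists_mem_eq_sup' Finset.univ_nonempty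
      (fun j => ‖α j‖ * ‖x j‖)
    rw [hi, hx i, mul_one]
    have hle : ∀ j, ‖α j‖ ≤ ‖α i‖ := by
      intro j
      have := Finset.le_sup' (fun j => ‖α j‖ * ‖x j‖) (Finset.mem_univ j)
      rw [hi, hx i, hx j, mul_one, mul_one] at this
      exact this
    rcases eq_or_lt_of_le (norm_nonneg (α i)) with h0 | h0
    · have hz : ∀ j, α j = 0 := by
        intro j
        have := hle j
        rw [← h0] at this
        exact norm_le_zero_iff.mp this
      simp [hz, ← h0]
    · set β : Fin (k + 2) → ℂ := fun j => α j / (‖α i‖ : ℂ) with hβ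
      have hαi0 : (‖α i‖ : ℂ) ≠ 0 := by exact_mod_cast h0.ne'
      have hβi : ‖β i‖ = 1 := by
        rw [hβ]; simp only [norm_div, Complex.norm_real, Real.norm_of_nonneg h0.le]
        exact div_self h0.ne'
      have hβle : ∀ j, ‖β j‖ ≤ 1 := by
        intro j
        rw [hβ]; simp only [norm_div, Complex.norm_real, Real.norm_of_nonneg h0.le]
        rw [div_le_one h0]
        exact hle j
      have hne : β i • x i ≠ 0 := by
        intro h
        have := congrArg norm h
        rw [norm_smul, hβi, hx i, norm_zero] at this
        norm_num at this
      obtain ⟨f, hf1, hfd⟩ := exists_dual_vector ℂ (β i • x i) (norm_ne_zero_iff.mpr hne)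
      have hfd' : f (β i • x i) = 1 := by
        rw [hfd, norm_smul, hβi, hx i]
        norm_num
      have hks := key_aux x H f hf1.le i (β i) hβi hfd' (Finset.univ.erase i)
        (Finset.notMem_erase i _) β rfl hβle
        (fun j hj hj2 => absurd (Finset.mem_erase.mpr ⟨hj, Finset.mem_univ j⟩) hj2)
      have hlow : (1 : ℝ) ≤ ‖∑ j, β j • x j‖ := by
        have : ‖f (∑ j, β j • x j)‖ = 1 := by rw [hks]; norm_num
        calc (1 : ℝ) = ‖f (∑ j, β j • x j)‖ := this.symm
          _ ≤ ‖f‖ * ‖∑ j, β j • x j‖ := f.le_opNorm _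
          _ = ‖∑ j, β j • x j‖ := by rw [hf1, one_mul]
      have hup := ub_aux x H β hβle
      have hS : ‖∑ j, β j • x j‖ = 1 := le_antisymm hup hlow
      have hrepr : ∑ j, α j • x j = (‖α i‖ : ℂ) • ∑ j, β j • x j := by
        rw [Finset.smul_sum]
        refine Finset.sum_congr rfl fun j _ => ?_
        rw [smul_smul, hβ]
        congr 1
        exact (mul_div_cancel₀ (α j) hαi0).symm
      rw [hrepr, norm_smul, hS, Complex.norm_real, Real.norm_of_nonneg h0.le, mul_one]
end

section
/- Let X, Y be normed spaces and Δ : S(X) → S(Y) a surjective isometry between their unit spheres. Define F : X → Y by F(0) = 0 and F(x) = ‖x‖ Δ(x/‖x‖) for x ≠ 0. Then F is Lipschitz with constant 3, i.e. ‖F(a) − F(b)‖ ≤ 3‖a − b‖ for all a, b ∈ X. -/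
theorem stmt7 {X Y : Type*} [NormedAddCommGroup X] [NormedSpace ℝ X]
    [NormedAddCommGroup Y] [NormedSpace ℝ Y]
    (Δ : Metric.sphere (0 : X) 1 → Metric.sphere (0 : Y) 1)
    (hsurj : Function.Surjective Δ)
    (hiso : ∀ u v, ‖(Δ u : Y) - (Δ v : Y)‖ = ‖(u : X) - (v : X)‖)
    (F : X → Y) (hF0 : F 0 = 0)
    (hF : ∀ (x : X) (hx : x ≠ 0),
      F x = ‖x‖ • (Δ ⟨‖x‖⁻¹ • x, by
        rw [mem_sphere_zero_iff_norm, norm_smul, norm_inv, norm_norm,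
          inv_mul_cancel₀ (fun h => hx (norm_eq_zero.mp h))]⟩ : Y)) :
    ∀ a b : X, ‖F a - F b‖ ≤ 3 * ‖a - b‖ := by
  intro a b
  wlog hab : ‖b‖ ≤ ‖a‖ with H
  · rw [norm_sub_rev (F a), norm_sub_rev a]
    exact H Δ hsurj hiso F hF0 hF b a (le_of_not_ge hab)
  by_cases hb : b = 0
  · subst hb
    by_cases ha : a = 0
    · simp [ha, hF0]
    · have hsph : ∀ w : Metric.sphere (0:X) 1, ‖(Δ w : Y)‖ = 1 :=
        fun w => mem_sphere_zero_iff_norm.mp (Δ w).2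
      rw [hF0, sub_zero, sub_zero, hF a ha, norm_smul, hsph, mul_one, norm_norm]
      nlinarith [norm_nonneg a]
  have ha : a ≠ 0 := by
    intro h
    apply hb
    rw [← norm_eq_zero]
    have : ‖a‖ = 0 := by simp [h]
    linarith [norm_nonneg b]
  set r := ‖a‖ with hr
  set s := ‖b‖ with hs
  have hrpos : 0 < r := norm_pos_iff.mpr ha
  have hspos : 0 < s := norm_pos_iff.mpr hb
  set u : Metric.sphere (0 : X) 1 := ⟨r⁻¹ • a, by
    rw [mem_sphere_zero_iff_norm, norm_smul, norm_inv, hr, norm_norm,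
      inv_mul_cancel₀ (ne_of_gt hrpos)]⟩ with hu
  set v : Metric.sphere (0 : X) 1 := ⟨s⁻¹ • b, by
    rw [mem_sphere_zero_iff_norm, norm_smul, norm_inv, hs, norm_norm,
      inv_mul_cancel₀ (ne_of_gt hspos)]⟩ with hv
  have hFa : F a = r • (Δ u : Y) := hF a ha
  have hFb : F b = s • (Δ v : Y) := hF b hb
  have hΔv : ‖(Δ v : Y)‖ = 1 := mem_sphere_zero_iff_norm.mp (Δ v).2
  have hsplit : F a - F b = r • ((Δ u : Y) - (Δ v : Y)) + (r - s) • (Δ v : Y) := by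
    rw [hFa, hFb, smul_sub, sub_smul]
    abel
  have h1 : ‖F a - F b‖ ≤ r * ‖(Δ u : Y) - (Δ v : Y)‖ + (r - s) := by
    rw [hsplit]
    calc ‖r • ((Δ u : Y) - (Δ v : Y)) + (r - s) • (Δ v : Y)‖
        ≤ ‖r • ((Δ u : Y) - (Δ v : Y))‖ + ‖(r - s) • (Δ v : Y)‖ := norm_add_le _ _
      _ = r * ‖(Δ u : Y) - (Δ v : Y)‖ + (r - s) := by
          rw [norm_smul, norm_smul, hΔv, mul_one, Real.norm_eq_abs, Real.norm_eq_abs,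
            abs_of_nonneg (le_of_lt hrpos), abs_of_nonneg (by linarith : (0:ℝ) ≤ r - s)]
  have h2 : ‖(Δ u : Y) - (Δ v : Y)‖ = ‖r⁻¹ • a - s⁻¹ • b‖ := hiso u v
  have h3 : r * ‖r⁻¹ • a - s⁻¹ • b‖ = ‖a - (r * s⁻¹) • b‖ := by
    have key : r • (r⁻¹ • a - s⁻¹ • b) = a - (r * s⁻¹) • b := by
      rw [smul_sub, smul_smul, smul_smul, mul_inv_cancel₀ (ne_of_gt hrpos), one_smul]
    rw [← key, norm_smul, Real.norm_eq_abs, abs_of_nonneg hrpos.le]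
  have h4 : ‖a - (r * s⁻¹) • b‖ ≤ ‖a - b‖ + ‖b - (r * s⁻¹) • b‖ := by
    calc ‖a - (r * s⁻¹) • b‖ = ‖(a - b) + (b - (r * s⁻¹) • b)‖ := by abel_nf
      _ ≤ ‖a - b‖ + ‖b - (r * s⁻¹) • b‖ := norm_add_le _ _
  have h5 : ‖b - (r * s⁻¹) • b‖ = r - s := by
    have : b - (r * s⁻¹) • b = (1 - r * s⁻¹) • b := by
      rw [sub_smul, one_smul]
    have h1rs : (1:ℝ) ≤ r * s⁻¹ := by
      rw [← div_eq_mul_inv]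
      exact (one_le_div hspos).mpr hab
    rw [this, norm_smul, Real.norm_eq_abs, ← hs, abs_of_nonpos (by linarith), neg_sub]
    field_simp
  have h6 : r - s ≤ ‖a - b‖ := by
    have := norm_sub_norm_le a b
    linarith
  calc ‖F a - F b‖ ≤ r * ‖(Δ u : Y) - (Δ v : Y)‖ + (r - s) := h1
    _ = ‖a - (r * s⁻¹) • b‖ + (r - s) := by rw [h2, h3]
    _ ≤ (‖a - b‖ + ‖b - (r * s⁻¹) • b‖) + (r - s) := by linarith [h4]
    _ = ‖a - b‖ + (r - s) + (r - s) := by rw [h5]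
    _ ≤ 3 * ‖a - b‖ := by linarith
end

section
/- Let Γ be an infinite set, X a complex Banach space, and Δ : S(ℓ∞(Γ)) → S(X) a surjective isometry. Suppose for each n ∈ Γ and λ ∈ 𝕋 there exists a norm-one functional φ ∈ X* with φ^{-1}({1}) ∩ S(X) = Δ(A(n,λ)), where A(n,λ) = {x ∈ S(ℓ∞(Γ)) : x(n) = λ}. If v is a nonzero partial isometry in ℓ∞(Γ), n ∈ Γ, and φΔ(v) = 0 for every such supporting functional φ of every A(n,λ) (λ ∈ 𝕋), then v(n) = 0. -/
open scoped ENNReal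

theorem stmt11 {Γ : Type*} [Infinite Γ] {X : Type*} [NormedAddCommGroup X]
    [NormedSpace ℂ X] [CompleteSpace X]
    (Δ : Metric.sphere (0 : lp (fun _ : Γ => ℂ) ∞) 1 → Metric.sphere (0 : X) 1)
    (hsurj : Function.Surjective Δ)
    (hiso : ∀ u v, ‖(Δ u : X) - (Δ v : X)‖ =
      ‖(u : lp (fun _ : Γ => ℂ) ∞) - (v : lp (fun _ : Γ => ℂ) ∞)‖)
    (A : Γ → ℂ → Set (Metric.sphere (0 : lp (fun _ : Γ => ℂ) ∞) 1))
    (hA : ∀ m lam, A m lam = {x | (x : lp (fun _ : Γ => ℂ) ∞) m = lam})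
    -- existence of supporting functionals
    (hsupp : ∀ (m : Γ) (lam : ℂ), ‖lam‖ = 1 → ∃ φ : X →L[ℂ] ℂ, ‖φ‖ = 1 ∧
      {y : Metric.sphere (0 : X) 1 | φ (y : X) = 1} = Δ '' A m lam)
    -- each supporting functional annihilates Δ(x) whenever x(m) = 0 (Lemma 2.1)
    (hkill : ∀ (m : Γ) (lam : ℂ), ‖lam‖ = 1 → ∀ φ : X →L[ℂ] ℂ, ‖φ‖ = 1 →
      {y : Metric.sphere (0 : X) 1 | φ (y : X) = 1} = Δ '' A m lam →
      ∀ x : Metric.sphere (0 : lp (fun _ : Γ => ℂ) ∞) 1,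
        (x : lp (fun _ : Γ => ℂ) ∞) m = 0 → φ (Δ x : X) = 0)
    (v : lp (fun _ : Γ => ℂ) ∞)
    (hvpi : ∀ k, ‖v k‖ = 0 ∨ ‖v k‖ = 1) (hvne : v ≠ 0)
    (hv1 : v ∈ Metric.sphere (0 : lp (fun _ : Γ => ℂ) ∞) 1)
    (n : Γ)
    (hzero : ∀ (lam : ℂ), ‖lam‖ = 1 → ∀ φ : X →L[ℂ] ℂ, ‖φ‖ = 1 →
      {y : Metric.sphere (0 : X) 1 | φ (y : X) = 1} = Δ '' A n lam →
      φ (Δ ⟨v, hv1⟩ : X) = 0) :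
    v n = 0 := by
  by_contra h
  have hn1 : ‖v n‖ = 1 := (hvpi n).resolve_left (by simpa using h)
  obtain ⟨φ, hφ, hset⟩ := hsupp n (v n) hn1
  have h0 := hzero (v n) hn1 φ hφ hset
  have hmem : (⟨v, hv1⟩ : Metric.sphere (0 : lp (fun _ : Γ => ℂ) ∞) 1) ∈ A n (v n) := by
    have hv' : (v : lp (fun _ : Γ => ℂ) ∞) ∈ Subtype.val '' A n (v n) := by
      rw [hA]; rfl
    obtain ⟨x, hx, hxv⟩ := hv'
    rwa [show (⟨v, hv1⟩ : Metric.sphere (0 : lp (fun _ : Γ => ℂ) ∞) 1) = x from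
      Subtype.coe_injective hxv.symm]
  have h1 : Δ ⟨v, hv1⟩ ∈ {y : Metric.sphere (0 : X) 1 | φ (y : X) = 1} := by
    rw [hset]; exact ⟨_, hmem, rfl⟩
  rw [Set.mem_setOf_eq, h0] at h1
  exact one_ne_zero h1.symm
end

section
/- Let Γ be an infinite set, X a complex Banach space, and Δ : S(ℓ∞(Γ)) → S(X) a surjective isometry. Then for each n ∈ Γ, each λ ∈ 𝕋, Δ(λ e_n) ∈ {λ Δ(e_n), conj(λ) Δ(e_n)}, where e_n is the indicator function of {n}. -/
open scoped ENNReal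

private lemma sq_le_of_norm_le' {z : ℂ} {r : ℝ} (h : ‖z‖ ≤ r) :
    z.re * z.re + z.im * z.im ≤ r * r := by
  have h0 : (0:ℝ) ≤ ‖z‖ := norm_nonneg z
  have h1 : ‖z‖ * ‖z‖ ≤ r * r := mul_self_le_mul_self h0 h
  calc z.re * z.re + z.im * z.im = Complex.normSq z := (Complex.normSq_apply z).symm
    _ = ‖z‖ * ‖z‖ := by rw [Complex.normSq_eq_norm_sq]; ring
    _ ≤ r * r := h1

private lemma sq_eq_of_norm_eq' {z : ℂ} {r : ℝ} (h : ‖z‖ = r) :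
    z.re * z.re + z.im * z.im = r * r := by
  calc z.re * z.re + z.im * z.im = Complex.normSq z := (Complex.normSq_apply z).symm
    _ = ‖z‖ * ‖z‖ := by rw [Complex.normSq_eq_norm_sq]; ring
    _ = r * r := by rw [h]

private lemma czero {w : ℂ} (hc1 : ‖w - 1‖ ≤ 1) (hc2 : ‖w + 1‖ ≤ 1) : w = 0 := by
  have A := sq_le_of_norm_le' hc1
  have B := sq_le_of_norm_le' hc2
  simp only [Complex.sub_re, Complex.sub_im, Complex.add_re, Complex.add_im,
    Complex.one_re, Complex.one_im, sub_zero, add_zero] at A B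
  apply Complex.ext <;> simp only [Complex.zero_re, Complex.zero_im] <;> nlinarith

private lemma cone {a b : ℂ} (ha : ‖a‖ ≤ 1) (hb : ‖b‖ ≤ 1) (hab : a - b = 2) :
    a = 1 ∧ b = -1 := by
  have A := sq_le_of_norm_le' ha
  have B := sq_le_of_norm_le' hb
  have hre : a.re - b.re = 2 := by
    have := congrArg Complex.re hab; simpa using this
  have him : a.im - b.im = 0 := by
    have := congrArg Complex.im hab; simpa using this
  have hbre : b.re = -1 := by nlinarith
  have hbim : b.im = 0 := by nlinarith
  have hare : a.re = 1 := by nlinarith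
  have haim : a.im = 0 := by nlinarith
  constructor
  · apply Complex.ext <;> simp [hare, haim]
  · apply Complex.ext <;> simp [hbre, hbim]

private lemma ctwo {ρ lam : ℂ} (hρ : ‖ρ‖ = 1) (hl : ‖lam‖ = 1)
    (h : ‖ρ - 1‖ = ‖lam - 1‖) : ρ = lam ∨ ρ = (starRingEnd ℂ) lam := by
  have A := sq_eq_of_norm_eq' hρ
  have B := sq_eq_of_norm_eq' hl
  have C := sq_eq_of_norm_eq' h
  have D := sq_eq_of_norm_eq' (rfl : ‖lam - 1‖ = ‖lam - 1‖)
  simp only [Complex.sub_re, Complex.sub_im, Complex.one_re, Complex.one_im, sub_zero] at C D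
  have hre : ρ.re = lam.re := by nlinarith
  have him2 : ρ.im * ρ.im = lam.im * lam.im := by nlinarith
  have him : ρ.im = lam.im ∨ ρ.im = -lam.im := by
    have hmul : (ρ.im - lam.im) * (ρ.im + lam.im) = 0 := by nlinarith
    rcases mul_eq_zero.mp hmul with h' | h'
    · left; linarith
    · right; linarith
  rcases him with h' | h'
  · left; exact Complex.ext hre h'
  · right
    apply Complex.ext
    · simpa using hre
    · simpa using h'

set_option maxHeartbeats 1000000 in
theorem stmt12 {Γ : Type*} [Infinite Γ] [DecidableEq Γ] {X : Type*} [NormedAddCommGroup X]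
    [NormedSpace ℂ X] [CompleteSpace X]
    (Δ : Metric.sphere (0 : lp (fun _ : Γ => ℂ) ∞) 1 → Metric.sphere (0 : X) 1)
    (hsurj : Function.Surjective Δ)
    (hiso : ∀ u v, ‖(Δ u : X) - (Δ v : X)‖ =
      ‖(u : lp (fun _ : Γ => ℂ) ∞) - (v : lp (fun _ : Γ => ℂ) ∞)‖)
    (n : Γ) (lam : ℂ) (hlam : ‖lam‖ = 1)
    (en : lp (fun _ : Γ => ℂ) ∞) (hen : ∀ k, en k = if k = n then 1 else 0)
    (h1 : en ∈ Metric.sphere (0 : lp (fun _ : Γ => ℂ) ∞) 1)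
    (h2 : lam • en ∈ Metric.sphere (0 : lp (fun _ : Γ => ℂ) ∞) 1) :
    (Δ ⟨lam • en, h2⟩ : X) = lam • (Δ ⟨en, h1⟩ : X) ∨
      (Δ ⟨lam • en, h2⟩ : X) = (starRingEnd ℂ) lam • (Δ ⟨en, h1⟩ : X) := by
  classical
  have hnorm_en : ‖en‖ = 1 := mem_sphere_zero_iff_norm.mp h1
  have hsp : ∀ c : ℂ, ‖c‖ = 1 → c • en ∈ Metric.sphere (0 : lp (fun _ : Γ => ℂ) ∞) 1 := by
    intro c hc
    rw [mem_sphere_zero_iff_norm, norm_smul, hc, hnorm_en, one_mul]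
  have hXnorm : ∀ w : Metric.sphere (0:X) 1, ‖(w : X)‖ = 1 :=
    fun w => mem_sphere_zero_iff_norm.mp w.2
  have coord_le : ∀ (x : lp (fun _ : Γ => ℂ) ∞) (k : Γ), ‖x k‖ ≤ ‖x‖ :=
    fun x k => lp.norm_apply_le_norm ENNReal.top_ne_zero x k
  -- KEY LEMMA: small rotations of points Δ(μ•eₙ) stay on the "circle" Δ(𝕋•eₙ)
  have keyA : ∀ (μ ν : ℂ) (hμ : ‖μ‖ = 1), ‖ν‖ = 1 → ‖ν - 1‖ < 1/2 →
      ∃ ρ : ℂ, ∃ hρ : ‖ρ‖ = 1,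
        ν • (Δ ⟨μ • en, hsp μ hμ⟩ : X) = (Δ ⟨ρ • en, hsp ρ hρ⟩ : X) := by
    intro μ ν hμ hν hνs
    set U : X := (Δ ⟨μ • en, hsp μ hμ⟩ : X) with hU
    have hUnorm : ‖U‖ = 1 := hXnorm _
    have hWnorm : ‖ν • U‖ = 1 := by rw [norm_smul, hν, hUnorm, one_mul]
    obtain ⟨zs, hzs⟩ := hsurj ⟨ν • U, mem_sphere_zero_iff_norm.mpr hWnorm⟩
    set z : lp (fun _ : Γ => ℂ) ∞ := (zs : lp (fun _ : Γ => ℂ) ∞) with hzdef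
    have hznorm : ‖z‖ = 1 := mem_sphere_zero_iff_norm.mp zs.2
    have hΔzs : (Δ zs : X) = ν • U := by rw [hzs]
    have hdist : ‖z - μ • en‖ = ‖ν - 1‖ := by
      have h := hiso zs ⟨μ • en, hsp μ hμ⟩
      rw [← hU] at h
      rw [hΔzs] at h
      have e : ν • U - U = (ν - 1) • U := by rw [sub_smul, one_smul]
      rw [e, norm_smul, hUnorm, mul_one] at h
      exact h.symm
    have happ : ∀ k, (z - μ • en) k = z k - μ * en k := by
      intro k
      simp [lp.coeFn_sub, lp.coeFn_smul, Pi.sub_apply, Pi.smul_apply, smul_eq_mul]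
      rfl
    have hcoordn : ‖z n - μ‖ ≤ ‖ν - 1‖ := by
      have h := coord_le (z - μ • en) n
      rw [hdist] at h
      have e : (z - μ • en) n = z n - μ := by
        rw [happ n, hen n]; simp
      rwa [e] at h
    have hcoordo : ∀ k, k ≠ n → ‖z k‖ ≤ ‖ν - 1‖ := by
      intro k hk
      have h := coord_le (z - μ • en) k
      rw [hdist] at h
      have e : (z - μ • en) k = z k := by
        rw [happ k, hen k, if_neg hk, mul_zero, sub_zero]
      rwa [e] at h
    -- the pulled-back point z vanishes off coordinate n
    have hzero : ∀ j, j ≠ n → z j = 0 := by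
      intro j hj
      by_contra hzj
      have hzjpos : 0 < ‖z j‖ := norm_pos_iff.mpr hzj
      have hzjle : ‖z j‖ ≤ 1 := by
        have := coord_le z j; rwa [hznorm] at this
      set ζ : ℂ := z j / (‖z j‖ : ℝ) with hζdef
      have hζnorm : ‖ζ‖ = 1 := by
        rw [hζdef, norm_div, Complex.norm_real, Real.norm_of_nonneg (norm_nonneg _),
          div_self (ne_of_gt hzjpos)]
      have hbdd : Memℓp (fun k => if k = j then (1:ℂ) else 0) ∞ := by
        apply memℓp_infty
        refine ⟨1, ?_⟩
        rintro r ⟨k, rfl⟩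
        by_cases h : k = j <;> simp [h]
      set ej : lp (fun _ : Γ => ℂ) ∞ := ⟨fun k => if k = j then (1:ℂ) else 0, hbdd⟩ with hejdef
      have hej_apply : ∀ k, ej k = if k = j then (1:ℂ) else 0 := fun k => rfl
      have hy_apply : ∀ (s : ℂ) (k : Γ), (μ • en + s • ej) k =
          (if k = n then μ else 0) + (if k = j then s else 0) := by
        intro s k
        simp only [lp.coeFn_add, lp.coeFn_smul, Pi.add_apply, Pi.smul_apply, smul_eq_mul,
          hen k, hej_apply k, mul_ite, mul_one, mul_zero]
      have hy_mem : ∀ s : ℂ, ‖s‖ = 1 →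
          (μ • en + s • ej) ∈ Metric.sphere (0 : lp (fun _ : Γ => ℂ) ∞) 1 := by
        intro s hs
        rw [mem_sphere_zero_iff_norm]
        apply le_antisymm
        · apply lp.norm_le_of_forall_le zero_le_one
          intro k
          rw [hy_apply s k]
          by_cases hkn : k = n
          · rw [if_pos hkn, if_neg (fun h' : k = j => hj (h'.symm.trans hkn)), add_zero, hμ]
          · by_cases hkj : k = j
            · rw [if_neg hkn, if_pos hkj, zero_add, hs]
            · rw [if_neg hkn, if_neg hkj, add_zero, norm_zero]; exact zero_le_one
        · have h := coord_le (μ • en + s • ej) n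
          rw [hy_apply s n, if_pos rfl, if_neg (fun h' : n = j => hj h'.symm), add_zero, hμ] at h
          exact h
      have hζnorm' : ‖(-ζ : ℂ)‖ = 1 := by rw [norm_neg]; exact hζnorm
      have hyp_mem := hy_mem ζ hζnorm
      have hym_mem := hy_mem (-ζ) hζnorm'
      set yp : lp (fun _ : Γ => ℂ) ∞ := μ • en + ζ • ej with hypdef
      set ym : lp (fun _ : Γ => ℂ) ∞ := μ • en + (-ζ) • ej with hymdef
      have hejnorm : ∀ c : ℂ, ‖c • ej‖ = ‖c‖ := by
        intro c
        apply le_antisymm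
        · apply lp.norm_le_of_forall_le (norm_nonneg c)
          intro k
          rw [lp.coeFn_smul, Pi.smul_apply, smul_eq_mul]
          by_cases h : k = j
          · rw [hej_apply, if_pos h, mul_one]
          · rw [hej_apply, if_neg h, mul_zero, norm_zero]; exact norm_nonneg c
        · have h := coord_le (c • ej) j
          rw [lp.coeFn_smul, Pi.smul_apply, smul_eq_mul, hej_apply, if_pos rfl, mul_one] at h
          exact h
      have hyd : yp - ym = (2 * ζ) • ej := by
        rw [hypdef, hymdef, add_sub_add_left_eq_sub, ← sub_smul, sub_neg_eq_add, ← two_mul]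
      have hydist : ‖yp - ym‖ = 2 := by
        rw [hyd, hejnorm, norm_mul, hζnorm, mul_one]
        norm_num
      have hVd : ‖(Δ ⟨yp, hyp_mem⟩ : X) - (Δ ⟨ym, hym_mem⟩ : X)‖ = 2 := by
        rw [hiso ⟨yp, hyp_mem⟩ ⟨ym, hym_mem⟩]; exact hydist
      have hVne : (Δ ⟨yp, hyp_mem⟩ : X) - (Δ ⟨ym, hym_mem⟩ : X) ≠ 0 := by
        intro h0; rw [h0, norm_zero] at hVd; norm_num at hVd
      obtain ⟨f, hf1, hf2⟩ := exists_dual_vector ℂ _ (norm_ne_zero_iff.mpr hVne)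
      rw [map_sub, hVd] at hf2
      have hf2' : f (Δ ⟨yp, hyp_mem⟩ : X) - f (Δ ⟨ym, hym_mem⟩ : X) = 2 := by
        rw [hf2]; norm_num
      have hfva : ‖f (Δ ⟨yp, hyp_mem⟩ : X)‖ ≤ 1 := by
        calc ‖f (Δ ⟨yp, hyp_mem⟩ : X)‖ ≤ ‖f‖ * ‖(Δ ⟨yp, hyp_mem⟩ : X)‖ := f.le_opNorm _
          _ = 1 := by rw [hf1, hXnorm, mul_one]
      have hfvb : ‖f (Δ ⟨ym, hym_mem⟩ : X)‖ ≤ 1 := by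
        calc ‖f (Δ ⟨ym, hym_mem⟩ : X)‖ ≤ ‖f‖ * ‖(Δ ⟨ym, hym_mem⟩ : X)‖ := f.le_opNorm _
          _ = 1 := by rw [hf1, hXnorm, mul_one]
      obtain ⟨hfp, hfm⟩ := cone hfva hfvb hf2'
      -- f vanishes at U
      have hd1 : ‖U - (Δ ⟨yp, hyp_mem⟩ : X)‖ = 1 := by
        have h := hiso ⟨μ • en, hsp μ hμ⟩ ⟨yp, hyp_mem⟩
        rw [← hU] at h
        rw [h]
        show ‖μ • en - yp‖ = 1
        have e : μ • en - yp = -(ζ • ej) := by rw [hypdef, sub_add_cancel_left]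
        rw [e, norm_neg, hejnorm, hζnorm]
      have hd2 : ‖U - (Δ ⟨ym, hym_mem⟩ : X)‖ = 1 := by
        have h := hiso ⟨μ • en, hsp μ hμ⟩ ⟨ym, hym_mem⟩
        rw [← hU] at h
        rw [h]
        show ‖μ • en - ym‖ = 1
        have e : μ • en - ym = -((-ζ) • ej) := by rw [hymdef, sub_add_cancel_left]
        rw [e, norm_neg, hejnorm, hζnorm']
      have hfU1 : ‖f U - 1‖ ≤ 1 := by
        rw [← hfp]
        calc ‖f U - f (Δ ⟨yp, hyp_mem⟩ : X)‖ = ‖f (U - (Δ ⟨yp, hyp_mem⟩ : X))‖ := by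
              rw [map_sub]
          _ ≤ ‖f‖ * ‖U - (Δ ⟨yp, hyp_mem⟩ : X)‖ := f.le_opNorm _
          _ = 1 := by rw [hf1, hd1, one_mul]
      have hfU2 : ‖f U + 1‖ ≤ 1 := by
        have : f U + 1 = f U - f (Δ ⟨ym, hym_mem⟩ : X) := by rw [hfm]; ring
        rw [this]
        calc ‖f U - f (Δ ⟨ym, hym_mem⟩ : X)‖ = ‖f (U - (Δ ⟨ym, hym_mem⟩ : X))‖ := by
              rw [map_sub]
          _ ≤ ‖f‖ * ‖U - (Δ ⟨ym, hym_mem⟩ : X)‖ := f.le_opNorm _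
          _ = 1 := by rw [hf1, hd2, one_mul]
      have hfU : f U = 0 := czero hfU1 hfU2
      -- contradiction: the gap under f is 1, but the distance is < 1
      have hfz : f ((Δ zs : X)) = 0 := by rw [hΔzs, map_smul, hfU, smul_zero]
      have hgapf : f ((Δ zs : X) - (Δ ⟨yp, hyp_mem⟩ : X)) = -1 := by
        rw [map_sub, hfz, hfp, zero_sub]
      have hgap : (1:ℝ) ≤ ‖z - yp‖ := by
        calc (1:ℝ) = ‖f ((Δ zs : X) - (Δ ⟨yp, hyp_mem⟩ : X))‖ := by
              rw [hgapf, norm_neg, norm_one]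
          _ ≤ ‖f‖ * ‖(Δ zs : X) - (Δ ⟨yp, hyp_mem⟩ : X)‖ := f.le_opNorm _
          _ = ‖z - yp‖ := by rw [hf1, one_mul, hiso zs ⟨yp, hyp_mem⟩]
      have hb : ‖z - yp‖ ≤ max (1 - ‖z j‖) ‖ν - 1‖ := by
        apply lp.norm_le_of_forall_le (le_max_of_le_right (norm_nonneg _))
        intro k
        have happk : (z - yp) k = z k - ((if k = n then μ else 0) + (if k = j then ζ else 0)) := by
          rw [lp.coeFn_sub, Pi.sub_apply, hypdef, hy_apply ζ k]
        rw [happk]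
        by_cases hkn : k = n
        · rw [if_pos hkn, if_neg (fun h' : k = j => hj (h'.symm.trans hkn)), add_zero, hkn]
          exact le_max_of_le_right hcoordn
        · by_cases hkj : k = j
          · rw [if_neg hkn, if_pos hkj, zero_add, hkj]
            have hne : ((‖z j‖ : ℝ) : ℂ) ≠ 0 := Complex.ofReal_ne_zero.mpr (ne_of_gt hzjpos)
            have hζr : ζ * (‖z j‖ : ℝ) = z j := by
              rw [hζdef]; exact div_mul_cancel₀ _ hne
            have hzkζ : z j - ζ = ζ * ((‖z j‖ : ℝ) - 1) := by
              rw [mul_sub, hζr, mul_one]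
            rw [hzkζ, norm_mul, hζnorm, one_mul]
            have hcast : ((‖z j‖ : ℝ) : ℂ) - 1 = ((‖z j‖ - 1 : ℝ) : ℂ) := by push_cast; ring
            rw [hcast, Complex.norm_real, Real.norm_eq_abs, abs_of_nonpos (by linarith)]
            exact le_max_of_le_left (by linarith)
          · rw [if_neg hkn, if_neg hkj, add_zero, sub_zero]
            exact le_max_of_le_right (hcoordo k hkn)
      have hM1 : max (1 - ‖z j‖) ‖ν - 1‖ < 1 :=
        max_lt (by linarith) (by linarith)
      linarith [lt_of_le_of_lt hb hM1]
    -- conclude: z = (z n) • en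
    have hz_eq : (z : ∀ _ : Γ, ℂ) = ((z n • en : lp (fun _ : Γ => ℂ) ∞) : ∀ _ : Γ, ℂ) := by
      funext k
      rw [lp.coeFn_smul, Pi.smul_apply, smul_eq_mul, hen k]
      by_cases hk : k = n
      · rw [if_pos hk, mul_one, hk]
      · rw [if_neg hk, mul_zero, hzero k hk]
    have hρnorm : ‖z n‖ = 1 := by
      have h := hznorm
      rw [show z = z n • en from lp.ext hz_eq] at h
      rwa [norm_smul, hnorm_en, mul_one] at h
    refine ⟨z n, hρnorm, ?_⟩
    have hzs_eq : zs = (⟨z n • en, hsp (z n) hρnorm⟩ :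
        Metric.sphere (0 : lp (fun _ : Γ => ℂ) ∞) 1) :=
      Subtype.ext (lp.ext hz_eq)
    rw [← hΔzs, hzs_eq]
  -- iterate small rotations
  have hone : ‖(1:ℂ)‖ = 1 := by norm_num
  have upow : ∀ (ν : ℂ), ‖ν‖ = 1 → ‖ν - 1‖ < 1/2 → ∀ m : ℕ,
      ∃ ρ : ℂ, ∃ hρ : ‖ρ‖ = 1,
        (ν ^ m) • (Δ ⟨en, h1⟩ : X) = (Δ ⟨ρ • en, hsp ρ hρ⟩ : X) := by
    intro ν hν hνs m
    induction m with
    | zero =>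
      refine ⟨1, hone, ?_⟩
      rw [pow_zero, one_smul]
      exact congrArg _ (congrArg Δ (Subtype.ext (one_smul ℂ en).symm))
    | succ m ih =>
      obtain ⟨ρ, hρ, hρeq⟩ := ih
      obtain ⟨ρ', hρ', hρ'eq⟩ := keyA ρ ν hρ hν hνs
      refine ⟨ρ', hρ', ?_⟩
      rw [pow_succ', mul_smul, hρeq, hρ'eq]
  -- reach all unimodular scalars
  have reach : ∀ lam' : ℂ, ‖lam'‖ = 1 →
      ∃ ρ : ℂ, ∃ hρ : ‖ρ‖ = 1,
        lam' • (Δ ⟨en, h1⟩ : X) = (Δ ⟨ρ • en, hsp ρ hρ⟩ : X) := by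
    intro lam' hl
    set θ : ℝ := Complex.arg lam' with hθ
    set ν : ℂ := Complex.exp ((θ/16 : ℝ) * Complex.I) with hνdef
    have hνnorm : ‖ν‖ = 1 := by
      rw [hνdef, Complex.norm_exp_ofReal_mul_I]
    have hθpi : |θ| ≤ Real.pi := Complex.abs_arg_le_pi lam'
    have hpi4 : Real.pi < 3.15 := Real.pi_lt_d2
    have habs : ‖((θ/16 : ℝ) : ℂ) * Complex.I‖ = |θ|/16 := by
      rw [norm_mul, Complex.norm_I, mul_one, Complex.norm_real, Real.norm_eq_abs, abs_div]
      norm_num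
    have hsmall : ‖ν - 1‖ < 1/2 := by
      rw [hνdef]
      have hle : ‖(Complex.exp (((θ/16 : ℝ) : ℂ) * Complex.I) - 1)‖
          ≤ 2 * (|θ|/16) := by
        have h' := Complex.norm_exp_sub_one_le (x := ((θ/16 : ℝ) : ℂ) * Complex.I)
          (by rw [habs]; linarith)
        rwa [habs] at h'
      have : 2 * (|θ|/16) < 1/2 := by linarith
      linarith
    have hν16 : ν ^ 16 = lam' := by
      rw [hνdef, ← Complex.exp_nat_mul]
      have e : ((16 : ℕ) : ℂ) * (((θ/16 : ℝ) : ℂ) * Complex.I) = (θ : ℂ) * Complex.I := by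
        push_cast; ring
      rw [e]
      have h' := Complex.norm_mul_exp_arg_mul_I lam'
      rw [show ‖lam'‖ = 1 from hl] at h'
      simpa [hθ] using h'
    obtain ⟨ρ, hρ, hρeq⟩ := upow ν hνnorm hsmall 16
    refine ⟨ρ, hρ, ?_⟩
    rw [← hν16]
    exact hρeq
  -- distance rigidity: the produced ρ is lam or conj lam
  have hrho : ∀ (lam' ρ : ℂ) (hl : ‖lam'‖ = 1) (hρ : ‖ρ‖ = 1),
      lam' • (Δ ⟨en, h1⟩ : X) = (Δ ⟨ρ • en, hsp ρ hρ⟩ : X) →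
      ρ = lam' ∨ ρ = (starRingEnd ℂ) lam' := by
    intro lam' ρ hl hρ heq
    have hunorm : ‖(Δ ⟨en, h1⟩ : X)‖ = 1 := hXnorm _
    have h := hiso ⟨ρ • en, hsp ρ hρ⟩ ⟨en, h1⟩
    rw [← heq] at h
    have e1 : lam' • (Δ ⟨en, h1⟩ : X) - (Δ ⟨en, h1⟩ : X) = (lam' - 1) • (Δ ⟨en, h1⟩ : X) := by
      rw [sub_smul, one_smul]
    have e2 : ((⟨ρ • en, hsp ρ hρ⟩ : Metric.sphere (0 : lp (fun _ : Γ => ℂ) ∞) 1) :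
        lp (fun _ : Γ => ℂ) ∞) - ((⟨en, h1⟩ : Metric.sphere (0 : lp (fun _ : Γ => ℂ) ∞) 1) :
        lp (fun _ : Γ => ℂ) ∞) = (ρ - 1) • en := by
      show ρ • en - en = (ρ - 1) • en
      rw [sub_smul, one_smul]
    rw [e1, e2, norm_smul, norm_smul, hunorm, mul_one, hnorm_en, mul_one] at h
    exact ctwo hρ hl h.symm
  -- final case analysis
  have hlamc : ‖(starRingEnd ℂ) lam‖ = 1 := by rw [RCLike.norm_conj]; exact hlam
  obtain ⟨ρ₁, hρ₁, heq₁⟩ := reach lam hlam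
  rcases hrho lam ρ₁ hlam hρ₁ heq₁ with hc1 | hc1
  · -- ρ₁ = lam : Δ(lam • en) = lam • Δ(en)
    left
    have e : Δ (⟨ρ₁ • en, hsp ρ₁ hρ₁⟩ : Metric.sphere (0 : lp (fun _ : Γ => ℂ) ∞) 1) =
        Δ ⟨lam • en, h2⟩ := by
      apply congrArg Δ
      apply Subtype.ext
      show ρ₁ • en = lam • en
      rw [hc1]
    rw [e] at heq₁
    exact heq₁.symm
  · -- ρ₁ = conj lam
    obtain ⟨ρ₂, hρ₂, heq₂⟩ := reach ((starRingEnd ℂ) lam) hlamc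
    rcases hrho ((starRingEnd ℂ) lam) ρ₂ hlamc hρ₂ heq₂ with hc2 | hc2
    · -- ρ₂ = conj lam : then lam • u = conj lam • u, so lam is real
      have e1 : Δ (⟨ρ₁ • en, hsp ρ₁ hρ₁⟩ : Metric.sphere (0 : lp (fun _ : Γ => ℂ) ∞) 1) =
          Δ (⟨ρ₂ • en, hsp ρ₂ hρ₂⟩ : Metric.sphere (0 : lp (fun _ : Γ => ℂ) ∞) 1) := by
        apply congrArg Δ
        apply Subtype.ext
        show ρ₁ • en = ρ₂ • en
        rw [hc1, hc2]
      have e2 : lam • (Δ ⟨en, h1⟩ : X) = (starRingEnd ℂ) lam • (Δ ⟨en, h1⟩ : X) := by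
        rw [heq₁, heq₂, ← e1]
      have hreal : lam = (starRingEnd ℂ) lam := by
        have h0 : (lam - (starRingEnd ℂ) lam) • (Δ ⟨en, h1⟩ : X) = 0 := by
          rw [sub_smul, e2, sub_self]
        rcases smul_eq_zero.mp h0 with h' | h'
        · exact sub_eq_zero.mp h'
        · exfalso
          have := hXnorm (Δ ⟨en, h1⟩)
          rw [h', norm_zero] at this
          norm_num at this
      left
      have e : Δ (⟨ρ₁ • en, hsp ρ₁ hρ₁⟩ : Metric.sphere (0 : lp (fun _ : Γ => ℂ) ∞) 1) =
          Δ ⟨lam • en, h2⟩ := by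
        apply congrArg Δ
        apply Subtype.ext
        show ρ₁ • en = lam • en
        rw [hc1, ← hreal]
      rw [e] at heq₁
      exact heq₁.symm
    · -- ρ₂ = conj (conj lam) = lam : Δ(lam • en) = conj lam • Δ(en)
      right
      have hcc : ρ₂ = lam := by rw [hc2, Complex.conj_conj]
      have e : Δ (⟨ρ₂ • en, hsp ρ₂ hρ₂⟩ : Metric.sphere (0 : lp (fun _ : Γ => ℂ) ∞) 1) =
          Δ ⟨lam • en, h2⟩ := by
        apply congrArg Δ
        apply Subtype.ext
        show ρ₂ • en = lam • en
        rw [hcc]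
      rw [e] at heq₂
      exact heq₂.symm
end

section
/- Let Γ be an infinite set, X a complex Banach space, Δ : S(ℓ∞(Γ)) → S(X) a surjective isometry, and v a nonzero partial isometry in ℓ∞(Γ). Then for each λ ∈ 𝕋, λ Δ(v) = Δ(λ ⊙ v), where (λ ⊙ v)(k) = σ_k(λ)v(k) and σ_k is the identity or conjugation determined by the action of Δ on λe_k. -/
set_option maxHeartbeats 1000000


open scoped ENNReal

theorem stmt13 {Γ : Type*} [Infinite Γ] [DecidableEq Γ] {X : Type*} [NormedAddCommGroup X]
    [NormedSpace ℂ X] [CompleteSpace X]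
    (Δ : Metric.sphere (0 : lp (fun _ : Γ => ℂ) ∞) 1 → Metric.sphere (0 : X) 1)
    (hsurj : Function.Surjective Δ)
    (hiso : ∀ u v, ‖(Δ u : X) - (Δ v : X)‖ =
      ‖(u : lp (fun _ : Γ => ℂ) ∞) - (v : lp (fun _ : Γ => ℂ) ∞)‖)
    (σ : Γ → ℂ → ℂ) (hσ : ∀ k, σ k = id ∨ σ k = (starRingEnd ℂ))
    -- σ is determined by the action of Δ on λ e_k
    (hσΔ : ∀ (k : Γ) (ek : lp (fun _ : Γ => ℂ) ∞),
      (∀ m, ek m = if m = k then 1 else 0) → ∀ lam : ℂ, ‖lam‖ = 1 →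
      ∀ (h1 : ek ∈ Metric.sphere (0 : lp (fun _ : Γ => ℂ) ∞) 1)
        (h2 : lam • ek ∈ Metric.sphere (0 : lp (fun _ : Γ => ℂ) ∞) 1),
        (Δ ⟨lam • ek, h2⟩ : X) = σ k lam • (Δ ⟨ek, h1⟩ : X))
    (odot : ℂ → lp (fun _ : Γ => ℂ) ∞ → lp (fun _ : Γ => ℂ) ∞)
    (hodot : ∀ α a m, odot α a m = σ m α * a m)
    (v : lp (fun _ : Γ => ℂ) ∞)
    (hvpi : ∀ k, ‖v k‖ = 0 ∨ ‖v k‖ = 1) (hvne : v ≠ 0)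
    (hv1 : v ∈ Metric.sphere (0 : lp (fun _ : Γ => ℂ) ∞) 1)
    (lam : ℂ) (hlam : ‖lam‖ = 1)
    (hlv : odot lam v ∈ Metric.sphere (0 : lp (fun _ : Γ => ℂ) ∞) 1) :
    lam • (Δ ⟨v, hv1⟩ : X) = (Δ ⟨odot lam v, hlv⟩ : X) := by
  classical
  have hlam0 : lam ≠ 0 := by
    intro h
    rw [h, norm_zero] at hlam
    exact one_ne_zero hlam.symm
  -- σ k is an involutive isometry
  have hσinv : ∀ k x, σ k (σ k x) = x := by
    intro k x; rcases hσ k with h | h <;> simp [h]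
  have hσnorm : ∀ k x, ‖σ k x‖ = ‖x‖ := by
    intro k x; rcases hσ k with h | h <;> simp [h]
  -- basic norm facts
  have hΔv : ‖(Δ ⟨v, hv1⟩ : X)‖ = 1 := mem_sphere_zero_iff_norm.mp (Δ ⟨v, hv1⟩).2
  have hmem : lam • (Δ ⟨v, hv1⟩ : X) ∈ Metric.sphere (0 : X) 1 := by
    rw [mem_sphere_zero_iff_norm, norm_smul, hlam, hΔv, one_mul]
  obtain ⟨w, hw⟩ := hsurj ⟨lam • (Δ ⟨v, hv1⟩ : X), hmem⟩
  have hwX : (Δ w : X) = lam • (Δ ⟨v, hv1⟩ : X) := by rw [hw]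
  have hwnorm : ‖(w : lp (fun _ : Γ => ℂ) ∞)‖ = 1 := mem_sphere_zero_iff_norm.mp w.2
  have hvnorm : ‖v‖ = 1 := mem_sphere_zero_iff_norm.mp hv1
  -- pointwise coordinate computations
  have happly : ∀ (f g : lp (fun _ : Γ => ℂ) ∞) (m : Γ), (f - g) m = f m - g m := by
    intro f g m; rw [lp.coeFn_sub]; rfl
  have hsmulap : ∀ (c : ℂ) (f : lp (fun _ : Γ => ℂ) ∞) (m : Γ), (c • f) m = c * f m := by
    intro c f m; rw [lp.coeFn_smul]; rfl
  -- the basis vectors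
  have hek : ∀ (k : Γ) (m : Γ),
      (lp.single ∞ k (1 : ℂ) : lp (fun _ : Γ => ℂ) ∞) m = if m = k then 1 else 0 := by
    intro k m
    by_cases h : m = k
    · subst h; rw [lp.single_apply_self, if_pos rfl]
    · rw [lp.single_apply_ne _ _ _ h, if_neg h]
  have heknorm : ∀ k : Γ, ‖(lp.single ∞ k (1 : ℂ) : lp (fun _ : Γ => ℂ) ∞)‖ = 1 := by
    intro k
    refine le_antisymm (lp.norm_le_of_forall_le zero_le_one ?_) ?_
    · intro m
      rw [hek k m]
      by_cases h : m = k <;> simp [h]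
    · have := lp.norm_apply_le_norm ENNReal.top_ne_zero
        (lp.single ∞ k (1 : ℂ) : lp (fun _ : Γ => ℂ) ∞) k
      rwa [hek k k, if_pos rfl, norm_one] at this
  have hsmem : ∀ (k : Γ) (c : ℂ), ‖c‖ = 1 →
      c • (lp.single ∞ k (1 : ℂ) : lp (fun _ : Γ => ℂ) ∞) ∈
        Metric.sphere (0 : lp (fun _ : Γ => ℂ) ∞) 1 := by
    intro k c hc
    rw [mem_sphere_zero_iff_norm, norm_smul, hc, heknorm, one_mul]
  -- the key equality derived from the isometric property and hσΔ
  have key : ∀ (k : Γ) (μ : ℂ), ‖μ‖ = 1 →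
      ‖(w : lp (fun _ : Γ => ℂ) ∞) - μ • lp.single ∞ k 1‖ =
        ‖v - (σ k (lam⁻¹ * σ k μ)) • lp.single ∞ k 1‖ := by
    intro k μ hμ
    set μ' : ℂ := σ k (lam⁻¹ * σ k μ) with hμ'def
    have hμ'norm : ‖μ'‖ = 1 := by
      rw [hμ'def, hσnorm, norm_mul, norm_inv, hlam, hσnorm, hμ, inv_one, one_mul]
    have hrel : σ k μ = lam * σ k μ' := by
      rw [hμ'def, hσinv, ← mul_assoc, mul_inv_cancel₀ hlam0, one_mul]
    have h1 : (lp.single ∞ k (1 : ℂ) : lp (fun _ : Γ => ℂ) ∞) ∈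
        Metric.sphere (0 : lp (fun _ : Γ => ℂ) ∞) 1 := by
      rw [mem_sphere_zero_iff_norm]; exact heknorm k
    have h2 := hsmem k μ hμ
    have h2' := hsmem k μ' hμ'norm
    have e2 := hσΔ k _ (hek k) μ hμ h1 h2
    have e3 := hσΔ k _ (hek k) μ' hμ'norm h1 h2'
    have e1 := hiso w ⟨μ • lp.single ∞ k 1, h2⟩
    have e4 := hiso ⟨v, hv1⟩ ⟨μ' • lp.single ∞ k 1, h2'⟩
    rw [e2, hwX] at e1
    rw [e3] at e4
    calc ‖(w : lp (fun _ : Γ => ℂ) ∞) - μ • lp.single ∞ k 1‖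
        = ‖lam • (Δ ⟨v, hv1⟩ : X) - σ k μ • (Δ ⟨_, h1⟩ : X)‖ := e1.symm
      _ = ‖lam • ((Δ ⟨v, hv1⟩ : X) - σ k μ' • (Δ ⟨_, h1⟩ : X))‖ := by
          rw [smul_sub, smul_smul, ← hrel]
      _ = ‖(Δ ⟨v, hv1⟩ : X) - σ k μ' • (Δ ⟨_, h1⟩ : X)‖ := by
          rw [norm_smul, hlam, one_mul]
      _ = ‖v - μ' • lp.single ∞ k 1‖ := e4
  -- coordinate bounds
  have hwle : ∀ m, ‖(w : lp (fun _ : Γ => ℂ) ∞) m‖ ≤ 1 := by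
    intro m
    have := lp.norm_apply_le_norm ENNReal.top_ne_zero (w : lp (fun _ : Γ => ℂ) ∞) m
    rwa [hwnorm] at this
  have hvle : ∀ m, ‖v m‖ ≤ 1 := by
    intro m; rcases hvpi m with h | h <;> rw [h] <;> norm_num
  -- every coordinate of w agrees with λ ⊙ v
  have hcoord : ∀ k, (w : lp (fun _ : Γ => ℂ) ∞) k = σ k lam * v k := by
    intro k
    rcases hvpi k with h0 | h1
    · -- case v k = 0 : show w k = 0
      have hvk : v k = 0 := norm_eq_zero.mp h0
      rw [hvk, mul_zero]
      -- for any unimodular μ, ‖w k - μ‖ ≤ 1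
      have hb : ∀ μ : ℂ, ‖μ‖ = 1 → ‖(w : lp (fun _ : Γ => ℂ) ∞) k - μ‖ ≤ 1 := by
        intro μ hμ
        have hK := key k μ hμ
        set μ' : ℂ := σ k (lam⁻¹ * σ k μ) with hμ'def
        have hμ'norm : ‖μ'‖ = 1 := by
          rw [hμ'def, hσnorm, norm_mul, norm_inv, hlam, hσnorm, hμ, inv_one, one_mul]
        have hRHS : ‖v - μ' • lp.single ∞ k 1‖ ≤ 1 := by
          refine lp.norm_le_of_forall_le zero_le_one ?_
          intro m
          rw [happly, hsmulap, hek]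
          by_cases h : m = k
          · subst h
            rw [if_pos rfl, hvk, mul_one, zero_sub, norm_neg, hμ'norm]
          · rw [if_neg h, mul_zero, sub_zero]
            exact hvle m
        have hc := lp.norm_apply_le_norm ENNReal.top_ne_zero
          ((w : lp (fun _ : Γ => ℂ) ∞) - μ • lp.single ∞ k 1) k
        rw [happly, hsmulap, hek, if_pos rfl, mul_one] at hc
        exact hc.trans (hK.trans_le hRHS)
      have h1 := hb 1 (by norm_num)
      have h2 := hb (-1) (by norm_num)
      have hp := parallelogram_law_with_norm ℂ ((w : lp (fun _ : Γ => ℂ) ∞) k) 1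
      have hwk := hwle k
      have : ‖(w : lp (fun _ : Γ => ℂ) ∞) k + 1‖ ≤ 1 := by
        have : (w : lp (fun _ : Γ => ℂ) ∞) k + 1 =
            (w : lp (fun _ : Γ => ℂ) ∞) k - (-1) := by ring
        rw [this]; exact h2
      have hz : ‖(w : lp (fun _ : Γ => ℂ) ∞) k‖ = 0 := by
        nlinarith [norm_nonneg ((w : lp (fun _ : Γ => ℂ) ∞) k),
          norm_nonneg ((w : lp (fun _ : Γ => ℂ) ∞) k - 1),
          norm_nonneg ((w : lp (fun _ : Γ => ℂ) ∞) k + 1), norm_one (α := ℂ)]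
      exact norm_eq_zero.mp hz
    · -- case ‖v k‖ = 1 : show w k = σ k lam * v k
      set z : ℂ := σ k lam * v k with hz
      have hznorm : ‖z‖ = 1 := by rw [hz, norm_mul, hσnorm, hlam, h1, one_mul]
      have hμnorm : ‖(-z : ℂ)‖ = 1 := by rw [norm_neg]; exact hznorm
      have hK := key k (-z) hμnorm
      -- compute μ' = -(v k)
      have hμ' : σ k (lam⁻¹ * σ k (-z)) = -(v k) := by
        rcases hσ k with h | h
        · simp only [hz, h, id_eq, mul_neg, neg_mul]
          rw [← mul_assoc, inv_mul_cancel₀ hlam0, one_mul]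
        · simp only [hz, h, map_neg, map_mul, Complex.conj_conj, mul_neg, neg_mul, neg_inj,
            neg_neg]
          rw [← mul_assoc, ← map_mul, inv_mul_cancel₀ hlam0, map_one, one_mul]
      rw [hμ'] at hK
      -- RHS ≥ 2
      have hR : (2 : ℝ) ≤ ‖v - (-(v k)) • lp.single ∞ k 1‖ := by
        have hc := lp.norm_apply_le_norm ENNReal.top_ne_zero
          (v - (-(v k)) • lp.single ∞ k 1) k
        rw [happly, hsmulap, hek, if_pos rfl, mul_one, sub_neg_eq_add] at hc
        have : ‖v k + v k‖ = 2 := by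
          have : v k + v k = (2 : ℂ) * v k := by ring
          rw [this, norm_mul, h1, mul_one]
          norm_num
        rw [this] at hc
        exact hc
      -- LHS ≤ max (‖w k + z‖) 1
      have hL : ‖(w : lp (fun _ : Γ => ℂ) ∞) - (-z) • lp.single ∞ k 1‖ ≤
          max ‖(w : lp (fun _ : Γ => ℂ) ∞) k + z‖ 1 := by
        refine lp.norm_le_of_forall_le (le_trans zero_le_one (le_max_right _ _)) ?_
        intro m
        rw [happly, hsmulap, hek]
        by_cases h : m = k
        · subst h
          rw [if_pos rfl, mul_one, sub_neg_eq_add]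
          exact le_max_left _ _
        · rw [if_neg h, mul_zero, sub_zero]
          exact le_trans (hwle m) (le_max_right _ _)
      have h2le : (2 : ℝ) ≤ max ‖(w : lp (fun _ : Γ => ℂ) ∞) k + z‖ 1 :=
        le_trans hR (hK ▸ hL)
      have hge2 : (2 : ℝ) ≤ ‖(w : lp (fun _ : Γ => ℂ) ∞) k + z‖ := by
        rcases le_max_iff.mp h2le with h | h
        · exact h
        · linarith
      have hwk := hwle k
      have hwk1 : ‖(w : lp (fun _ : Γ => ℂ) ∞) k‖ = 1 := by
        have := norm_add_le ((w : lp (fun _ : Γ => ℂ) ∞) k) z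
        rw [hznorm] at this
        linarith
      have heq2 : ‖(w : lp (fun _ : Γ => ℂ) ∞) k + z‖ = 2 := by
        have := norm_add_le ((w : lp (fun _ : Γ => ℂ) ∞) k) z
        rw [hznorm, hwk1] at this
        linarith
      have hp := parallelogram_law_with_norm ℂ ((w : lp (fun _ : Γ => ℂ) ∞) k) z
      have hdz : ‖(w : lp (fun _ : Γ => ℂ) ∞) k - z‖ = 0 := by
        nlinarith [norm_nonneg ((w : lp (fun _ : Γ => ℂ) ∞) k - z)]
      exact sub_eq_zero.mp (norm_eq_zero.mp hdz)
  -- conclude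
  have hweq : (w : lp (fun _ : Γ => ℂ) ∞) = odot lam v := by
    apply lp.ext
    funext m
    rw [hcoord m, hodot]
  have hsub : (⟨odot lam v, hlv⟩ : Metric.sphere (0 : lp (fun _ : Γ => ℂ) ∞) 1) = w :=
    Subtype.ext hweq.symm
  rw [hsub, hwX]
end

section
/- Let Γ be an infinite set and X a complex Banach space, and let Δ : S(ℓ∞(Γ)) → S(X) be a surjective isometry. Assume that the homogeneous extension F(x) = ‖x‖Δ(x/‖x‖), F(0)=0, satisfies F(a+b) = F(a)+F(b) whenever a, b are finite linear combinations ∑ α_j ⊙ v_j, ∑ β_j ⊙ v_j over a common family of mutually orthogonal nonzero partial isometries. Then F is additive on all of ℓ∞(Γ), hence real-linear, and is a surjective real-linear isometry extending Δ. -/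
open scoped ENNReal

set_option maxHeartbeats 1000000 in
set_option synthInstance.maxHeartbeats 400000 in

theorem stmt16 {Γ : Type*} [Infinite Γ] {X : Type*} [NormedAddCommGroup X]
    [NormedSpace ℂ X] [CompleteSpace X]
    (Δ : Metric.sphere (0 : lp (fun _ : Γ => ℂ) ∞) 1 → Metric.sphere (0 : X) 1)
    (hsurj : Function.Surjective Δ)
    (hiso : ∀ u v, ‖(Δ u : X) - (Δ v : X)‖ =
      ‖(u : lp (fun _ : Γ => ℂ) ∞) - (v : lp (fun _ : Γ => ℂ) ∞)‖)
    (σ : Γ → ℂ → ℂ) (hσ : ∀ k, σ k = id ∨ σ k = (starRingEnd ℂ))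
    (odot : ℂ → lp (fun _ : Γ => ℂ) ∞ → lp (fun _ : Γ => ℂ) ∞)
    (hodot : ∀ α a m, odot α a m = σ m α * a m)
    (F : lp (fun _ : Γ => ℂ) ∞ → X) (hF0 : F 0 = 0)
    (hF : ∀ (x : lp (fun _ : Γ => ℂ) ∞) (hx : x ≠ 0),
      F x = ‖x‖ • (Δ ⟨‖x‖⁻¹ • x, by
        rw [mem_sphere_zero_iff_norm, norm_smul, norm_inv, norm_norm,
          inv_mul_cancel₀ (fun h => hx (norm_eq_zero.mp h))]⟩ : X))
    -- additivity on algebraic elements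
    (halg : ∀ (k : ℕ) (v : Fin (k + 1) → lp (fun _ : Γ => ℂ) ∞),
      (∀ j m, ‖v j m‖ = 0 ∨ ‖v j m‖ = 1) → (∀ j, v j ≠ 0) →
      (∀ i j, i ≠ j → ∀ m, v i m * v j m = 0) →
      ∀ α β : Fin (k + 1) → ℂ,
        F ((∑ j, odot (α j) (v j)) + ∑ j, odot (β j) (v j)) =
          F (∑ j, odot (α j) (v j)) + F (∑ j, odot (β j) (v j))) :
    (∀ a b, F (a + b) = F a + F b) ∧
    (∀ (r : ℝ) (a : lp (fun _ : Γ => ℂ) ∞), F (r • a) = r • F a) ∧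
    Function.Surjective F ∧
    (∀ a b, ‖F a - F b‖ = ‖a - b‖) ∧
    (∀ (x : lp (fun _ : Γ => ℂ) ∞)
        (hx : x ∈ Metric.sphere (0 : lp (fun _ : Γ => ℂ) ∞) 1),
      F x = (Δ ⟨x, hx⟩ : X)) := by
  classical
  have hDnorm : ∀ p, ‖(Δ p : X)‖ = 1 := fun p => mem_sphere_zero_iff_norm.mp (Δ p).2
  have hnormF : ∀ x : lp (fun _ : Γ => ℂ) ∞, ‖F x‖ = ‖x‖ := by
    intro x
    rcases eq_or_ne x 0 with rfl | hx
    · rw [hF0, norm_zero, norm_zero]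
    · rw [hF x hx, norm_smul, hDnorm, Real.norm_eq_abs, abs_of_nonneg (norm_nonneg x), mul_one]
  have hLip : ∀ x y : lp (fun _ : Γ => ℂ) ∞, ‖F x - F y‖ ≤ 3 * ‖x - y‖ := by
    intro x y
    rcases eq_or_ne x 0 with rfl | hx0
    · rw [hF0, zero_sub, norm_neg, hnormF, zero_sub, norm_neg]
      nlinarith [norm_nonneg y]
    rcases eq_or_ne y 0 with rfl | hy0
    · rw [hF0, sub_zero, hnormF, sub_zero]
      nlinarith [norm_nonneg x]
    have hnx : ‖x‖ ≠ 0 := fun h => hx0 (norm_eq_zero.mp h)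
    have hny : ‖y‖ ≠ 0 := fun h => hy0 (norm_eq_zero.mp h)
    rw [hF x hx0, hF y hy0]
    have hkey : ∀ (p q : Metric.sphere (0 : lp (fun _ : Γ => ℂ) ∞) 1),
        (p : lp (fun _ : Γ => ℂ) ∞) = ‖x‖⁻¹ • x → (q : lp (fun _ : Γ => ℂ) ∞) = ‖y‖⁻¹ • y →
        ‖‖x‖ • (Δ p : X) - ‖y‖ • (Δ q : X)‖ ≤ 3 * ‖x - y‖ := by
      intro p q hp hq
      have h1 : ‖x‖ • ((Δ p : X) - (Δ q : X)) + (‖x‖ - ‖y‖) • (Δ q : X) =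
          ‖x‖ • (Δ p : X) - ‖y‖ • (Δ q : X) := by
        rw [smul_sub, sub_smul]; abel
      have h2 : ‖x‖ * ‖(p : lp (fun _ : Γ => ℂ) ∞) - (q : lp (fun _ : Γ => ℂ) ∞)‖
          ≤ 2 * ‖x - y‖ := by
        have e1 : ‖x‖ • ((p : lp (fun _ : Γ => ℂ) ∞) - (q : lp (fun _ : Γ => ℂ) ∞)) =
            (x - y) + (1 - ‖x‖ * ‖y‖⁻¹) • y := by
          rw [hp, hq, smul_sub, smul_inv_smul₀ hnx, smul_smul, sub_smul, one_smul]
          abel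
        have e2 : ‖x‖ * ‖(p : lp (fun _ : Γ => ℂ) ∞) - (q : lp (fun _ : Γ => ℂ) ∞)‖ =
            ‖‖x‖ • ((p : lp (fun _ : Γ => ℂ) ∞) - (q : lp (fun _ : Γ => ℂ) ∞))‖ := by
          rw [norm_smul, Real.norm_eq_abs, abs_of_nonneg (norm_nonneg x)]
        have e3 : ‖(1 - ‖x‖ * ‖y‖⁻¹) • y‖ ≤ ‖x - y‖ := by
          rw [norm_smul, Real.norm_eq_abs]
          have e4 : |1 - ‖x‖ * ‖y‖⁻¹| * ‖y‖ = |‖y‖ - ‖x‖| := by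
            rw [← abs_of_nonneg (norm_nonneg y), ← abs_mul]
            congr 1
            field_simp
            rw [abs_of_nonneg (norm_nonneg y)]; ring
          rw [e4]
          calc |‖y‖ - ‖x‖| ≤ ‖y - x‖ := abs_norm_sub_norm_le y x
            _ = ‖x - y‖ := norm_sub_rev y x
        calc ‖x‖ * ‖(p : lp (fun _ : Γ => ℂ) ∞) - (q : lp (fun _ : Γ => ℂ) ∞)‖
            = ‖(x - y) + (1 - ‖x‖ * ‖y‖⁻¹) • y‖ := by rw [e2, e1]
          _ ≤ ‖x - y‖ + ‖(1 - ‖x‖ * ‖y‖⁻¹) • y‖ := norm_add_le _ _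
          _ ≤ ‖x - y‖ + ‖x - y‖ := by linarith
          _ = 2 * ‖x - y‖ := by ring
      have h3 : |‖x‖ - ‖y‖| ≤ ‖x - y‖ := abs_norm_sub_norm_le x y
      calc ‖‖x‖ • (Δ p : X) - ‖y‖ • (Δ q : X)‖
          = ‖‖x‖ • ((Δ p : X) - (Δ q : X)) + (‖x‖ - ‖y‖) • (Δ q : X)‖ := by rw [h1]
        _ ≤ ‖‖x‖ • ((Δ p : X) - (Δ q : X))‖ + ‖(‖x‖ - ‖y‖) • (Δ q : X)‖ := norm_add_le _ _
        _ = ‖x‖ * ‖(p : lp (fun _ : Γ => ℂ) ∞) - (q : lp (fun _ : Γ => ℂ) ∞)‖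
            + |‖x‖ - ‖y‖| := by
            rw [norm_smul, norm_smul, hDnorm, mul_one, Real.norm_eq_abs, Real.norm_eq_abs,
              abs_of_nonneg (norm_nonneg x), hiso]
        _ ≤ 2 * ‖x - y‖ + ‖x - y‖ := by linarith
        _ = 3 * ‖x - y‖ := by ring
    exact hkey _ _ rfl rfl
  have key : ∀ (a b : lp (fun _ : Γ => ℂ) ∞) (ε : ℝ), 0 < ε →
      ‖F (a + b) - (F a + F b)‖ ≤ 24 * ε := by
    intro a b ε hε
    -- the grid value associated to a pair of integers
    set val : ℤ × ℤ → ℂ := fun p => (ε * p.1 : ℝ) + (ε * p.2 : ℝ) * Complex.I with hvaldef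
    set g : ℂ → ℤ × ℤ := fun z => (⌊z.re / ε⌋, ⌊z.im / ε⌋) with hgdef
    have herr : ∀ z : ℂ, ‖z - val (g z)‖ ≤ 2 * ε := by
      intro z
      have h1 : (z - val (g z)).re = z.re - ⌊z.re / ε⌋ * ε := by
        simp [hvaldef, hgdef, Complex.sub_re, Complex.add_re, Complex.mul_re]
        ring
      have h2 : (z - val (g z)).im = z.im - ⌊z.im / ε⌋ * ε := by
        simp [hvaldef, hgdef, Complex.sub_im, Complex.add_im, Complex.mul_im]
        ring
      have b1 : |(z - val (g z)).re| ≤ ε := by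
        rw [h1, abs_le]
        constructor
        · linarith [Int.sub_floor_div_mul_nonneg z.re hε]
        · linarith [Int.sub_floor_div_mul_lt z.re hε]
      have b2 : |(z - val (g z)).im| ≤ ε := by
        rw [h2, abs_le]
        constructor
        · linarith [Int.sub_floor_div_mul_nonneg z.im hε]
        · linarith [Int.sub_floor_div_mul_lt z.im hε]
      calc ‖z - val (g z)‖ ≤ |(z - val (g z)).re| + |(z - val (g z)).im| :=
            Complex.norm_le_abs_re_add_abs_im _
        _ ≤ ε + ε := add_le_add b1 b2
        _ = 2 * ε := by ring
    set φ : Γ → (ℤ × ℤ) × (ℤ × ℤ) × ℤ :=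
      fun m => (g (a m), g (b m), if σ m = id then 0 else 1) with hφdef
    -- range of φ is finite
    have hcoord : ∀ (c : lp (fun _ : Γ => ℂ) ∞) m, |(c m).re| ≤ ‖c‖ ∧ |(c m).im| ≤ ‖c‖ := by
      intro c m
      have h1 : ‖c m‖ ≤ ‖c‖ := lp.norm_apply_le_norm ENNReal.top_ne_zero c m
      exact ⟨le_trans (Complex.abs_re_le_norm _) h1, le_trans (Complex.abs_im_le_norm _) h1⟩
    set M : ℝ := max ‖a‖ ‖b‖ with hMdef
    have hbound : ∀ (t : ℝ), |t| ≤ M → ⌊-M / ε⌋ ≤ ⌊t / ε⌋ ∧ ⌊t / ε⌋ ≤ ⌊M / ε⌋ := by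
      intro t ht
      rw [abs_le] at ht
      constructor
      · apply Int.floor_le_floor
        gcongr
        exact ht.1
      · apply Int.floor_le_floor
        gcongr
        exact ht.2
    have hfin : (Set.range φ).Finite := by
      apply Set.Finite.subset (Set.finite_Icc
        (((⌊-M / ε⌋, ⌊-M / ε⌋), (⌊-M / ε⌋, ⌊-M / ε⌋), (0 : ℤ)))
        (((⌊M / ε⌋, ⌊M / ε⌋), (⌊M / ε⌋, ⌊M / ε⌋), (1 : ℤ))))
      rintro _ ⟨m, rfl⟩
      have ha1 := hbound _ (le_trans (hcoord a m).1 (le_max_left _ _))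
      have ha2 := hbound _ (le_trans (hcoord a m).2 (le_max_left _ _))
      have hb1 := hbound _ (le_trans (hcoord b m).1 (le_max_right _ _))
      have hb2 := hbound _ (le_trans (hcoord b m).2 (le_max_right _ _))
      simp only [Set.mem_Icc, Prod.le_def, hφdef, hgdef]
      refine ⟨⟨⟨ha1.1, ha2.1⟩, ⟨hb1.1, hb2.1⟩, ?_⟩, ⟨ha1.2, ha2.2⟩, ⟨hb1.2, hb2.2⟩, ?_⟩
      · split <;> norm_num
      · split <;> norm_num
    haveI : Fintype ↥(Set.range φ) := hfin.fintype
    haveI : Nonempty ↥(Set.range φ) := ⟨⟨φ (Classical.arbitrary Γ), Set.mem_range_self _⟩⟩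
    -- the partial isometries: indicators of the fibers of φ
    set v : ↥(Set.range φ) → lp (fun _ : Γ => ℂ) ∞ := fun t =>
      ⟨fun m => if φ m = (t : (ℤ × ℤ) × (ℤ × ℤ) × ℤ) then 1 else 0,
        memℓp_infty ⟨1, by rintro r ⟨m, rfl⟩; dsimp only; split <;> simp⟩⟩ with hvdef
    have hvco : ∀ t m, v t m = if φ m = (t : (ℤ × ℤ) × (ℤ × ℤ) × ℤ) then 1 else 0 :=
      fun t m => rfl
    have hv01 : ∀ t m, ‖v t m‖ = 0 ∨ ‖v t m‖ = 1 := by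
      intro t m
      rw [hvco]
      split
      · right; simp
      · left; simp
    have hvne : ∀ t, v t ≠ 0 := by
      intro t h
      obtain ⟨m, hm⟩ := t.2
      have := congrFun (congrArg (Subtype.val) h) m
      rw [hvco t m] at this
      rw [if_pos hm] at this
      exact one_ne_zero this
    have horth : ∀ i j, i ≠ j → ∀ m, v i m * v j m = 0 := by
      intro i j hij m
      rw [hvco, hvco]
      by_cases h1 : φ m = (i : (ℤ × ℤ) × (ℤ × ℤ) × ℤ)
      · rw [if_pos h1]
        rw [if_neg fun h2 => hij (Subtype.ext (h1.symm.trans h2))]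
        rw [mul_zero]
      · rw [if_neg h1, zero_mul]
    -- the coefficients
    set A : ((ℤ × ℤ) × (ℤ × ℤ) × ℤ) → ℂ :=
      fun t => if t.2.2 = 0 then val t.1 else starRingEnd ℂ (val t.1) with hAdef
    set B : ((ℤ × ℤ) × (ℤ × ℤ) × ℤ) → ℂ :=
      fun t => if t.2.2 = 0 then val t.2.1 else starRingEnd ℂ (val t.2.1) with hBdef
    set α : ↥(Set.range φ) → ℂ := fun t => A t.1 with hαdef
    set β : ↥(Set.range φ) → ℂ := fun t => B t.1 with hβdef
    set a' : lp (fun _ : Γ => ℂ) ∞ := ∑ t, odot (α t) (v t) with ha'def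
    set b' : lp (fun _ : Γ => ℂ) ∞ := ∑ t, odot (β t) (v t) with hb'def
    have hσne : ∀ m, σ m = starRingEnd ℂ → σ m ≠ id := by
      intro m h hid
      have h2 := congrFun (hid.symm.trans h) Complex.I
      simp [Complex.ext_iff] at h2
      norm_num at h2
    -- the coordinates of the algebraic elements
    have hsum : ∀ (γ : ↥(Set.range φ) → ℂ) m,
        (∑ t, odot (γ t) (v t)) m = σ m (γ ⟨φ m, Set.mem_range_self m⟩) := by
      intro γ m
      have hco : (∑ t, odot (γ t) (v t)) m = ∑ t, odot (γ t) (v t) m := by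
        rw [lp.coeFn_sum]
        simp
      rw [hco]
      rw [Finset.sum_eq_single (⟨φ m, Set.mem_range_self m⟩ : ↥(Set.range φ))]
      · rw [hodot, hvco, if_pos rfl, mul_one]
      · intro t _ ht
        rw [hodot, hvco, if_neg fun h => ht (Subtype.ext h.symm), mul_zero]
      · intro h
        exact absurd (Finset.mem_univ _) h
    have hacoord : ∀ m, a' m = val (g (a m)) := by
      intro m
      rw [ha'def, hsum α m, hαdef]
      rcases hσ m with h | h
      · rw [h]
        show A (φ m) = val (g (a m))
        rw [hAdef]
        simp only [hφdef]
        rw [if_pos (by rw [if_pos h])]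
      · rw [h]
        show starRingEnd ℂ (A (φ m)) = val (g (a m))
        rw [hAdef]
        simp only [hφdef]
        rw [if_neg (by rw [if_neg (hσne m h)]; norm_num)]
        exact Complex.conj_conj _
    have hbcoord : ∀ m, b' m = val (g (b m)) := by
      intro m
      rw [hb'def, hsum β m, hβdef]
      rcases hσ m with h | h
      · rw [h]
        show B (φ m) = val (g (b m))
        rw [hBdef]
        simp only [hφdef]
        rw [if_pos (by rw [if_pos h])]
      · rw [h]
        show starRingEnd ℂ (B (φ m)) = val (g (b m))
        rw [hBdef]
        simp only [hφdef]
        rw [if_neg (by rw [if_neg (hσne m h)]; norm_num)]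
        exact Complex.conj_conj _
    -- approximation bounds
    have hna : ‖a - a'‖ ≤ 2 * ε := by
      apply lp.norm_le_of_forall_le (by positivity)
      intro m
      have h1 : (a - a') m = a m - a' m := by rw [lp.coeFn_sub]; rfl
      rw [h1, hacoord m]
      exact herr (a m)
    have hnb : ‖b - b'‖ ≤ 2 * ε := by
      apply lp.norm_le_of_forall_le (by positivity)
      intro m
      have h1 : (b - b') m = b m - b' m := by rw [lp.coeFn_sub]; rfl
      rw [h1, hbcoord m]
      exact herr (b m)
    -- additivity at the algebraic elements, via halg
    have hFacc : F (a' + b') = F a' + F b' := by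
      obtain ⟨k, hk⟩ : ∃ k, Fintype.card ↥(Set.range φ) = k + 1 :=
        ⟨Fintype.card ↥(Set.range φ) - 1, (Nat.succ_pred_eq_of_pos Fintype.card_pos).symm⟩
      let e : Fin (k + 1) ≃ ↥(Set.range φ) :=
        (finCongr hk.symm).trans (Fintype.equivFin ↥(Set.range φ)).symm
      have h := halg k (fun j => v (e j)) (fun j m => hv01 (e j) m) (fun j => hvne (e j))
        (fun i j hij m => horth (e i) (e j) (fun h => hij (e.injective h)) m)
        (fun j => α (e j)) (fun j => β (e j))
      rwa [Equiv.sum_comp e (fun t => odot (α t) (v t)),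
        Equiv.sum_comp e (fun t => odot (β t) (v t)), ← ha'def, ← hb'def] at h
    -- conclude
    have heq : F (a + b) - (F a + F b) =
        (F (a + b) - F (a' + b')) + (F a' - F a) + (F b' - F b) := by
      rw [hFacc]; abel
    have t1 := hLip (a + b) (a' + b')
    have t2 := hLip a' a
    have t3 := hLip b' b
    have t4 : ‖(a + b) - (a' + b')‖ ≤ ‖a - a'‖ + ‖b - b'‖ := by
      have : (a + b) - (a' + b') = (a - a') + (b - b') := by abel
      rw [this]
      exact norm_add_le _ _
    have t5 : ‖a' - a‖ = ‖a - a'‖ := norm_sub_rev _ _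
    have t6 : ‖b' - b‖ = ‖b - b'‖ := norm_sub_rev _ _
    calc ‖F (a + b) - (F a + F b)‖
        = ‖(F (a + b) - F (a' + b')) + (F a' - F a) + (F b' - F b)‖ := by rw [heq]
      _ ≤ ‖(F (a + b) - F (a' + b')) + (F a' - F a)‖ + ‖F b' - F b‖ := norm_add_le _ _
      _ ≤ ‖F (a + b) - F (a' + b')‖ + ‖F a' - F a‖ + ‖F b' - F b‖ := by
          have := norm_add_le (F (a + b) - F (a' + b')) (F a' - F a)
          linarith
      _ ≤ 24 * ε := by
          rw [t5] at t2
          rw [t6] at t3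
          nlinarith [norm_nonneg (a - a'), norm_nonneg (b - b')]
  have hadd : ∀ a b, F (a + b) = F a + F b := by
    intro a b
    have h0 : ‖F (a + b) - (F a + F b)‖ ≤ 0 := by
      apply le_of_forall_pos_le_add
      intro ε hε
      rw [zero_add]
      calc ‖F (a + b) - (F a + F b)‖ ≤ 24 * (ε / 24) := key a b (ε / 24) (by linarith)
        _ = ε := by ring
    have h1 : F (a + b) - (F a + F b) = 0 := norm_le_zero_iff.mp h0
    exact sub_eq_zero.mp h1
  have hneg : ∀ a, F (-a) = - F a := by
    intro a
    have h := hadd a (-a)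
    rw [add_neg_cancel, hF0] at h
    exact eq_neg_of_add_eq_zero_right h.symm
  have hsmulpos : ∀ (r : ℝ), 0 < r → ∀ a, F (r • a) = r • F a := by
    intro r hr a
    rcases eq_or_ne a 0 with rfl | ha
    · simp [hF0]
    have hra : r • a ≠ 0 := by
      simp [smul_eq_zero, ha, ne_of_gt hr]
    have hnorm : ‖r • a‖ = r * ‖a‖ := by
      rw [norm_smul, Real.norm_eq_abs, abs_of_pos hr]
    have hkey : (⟨‖r • a‖⁻¹ • (r • a), by
        rw [mem_sphere_zero_iff_norm, norm_smul, norm_inv, norm_norm,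
          inv_mul_cancel₀ (fun h => hra (norm_eq_zero.mp h))]⟩ :
        Metric.sphere (0 : lp (fun _ : Γ => ℂ) ∞) 1) =
        ⟨‖a‖⁻¹ • a, by
        rw [mem_sphere_zero_iff_norm, norm_smul, norm_inv, norm_norm,
          inv_mul_cancel₀ (fun h => ha (norm_eq_zero.mp h))]⟩ := by
      apply Subtype.ext
      show ‖r • a‖⁻¹ • (r • a) = ‖a‖⁻¹ • a
      rw [hnorm, smul_smul, mul_inv, mul_comm r⁻¹, mul_assoc, inv_mul_cancel₀ (ne_of_gt hr),
        mul_one]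
    rw [hF (r • a) hra, hF a ha, hkey, hnorm, smul_smul]
  have hsmul : ∀ (r : ℝ) (a : lp (fun _ : Γ => ℂ) ∞), F (r • a) = r • F a := by
    intro r a
    rcases lt_trichotomy r 0 with hr | rfl | hr
    · have : r • a = -((-r) • a) := by rw [neg_smul, neg_neg]
      rw [this, hneg, hsmulpos (-r) (by linarith) a, neg_smul, neg_neg]
    · simp [hF0]
    · exact hsmulpos r hr a
  refine ⟨hadd, hsmul, ?_, ?_, ?_⟩
  · -- surjectivity
    intro y
    rcases eq_or_ne y 0 with rfl | hy
    · exact ⟨0, hF0⟩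
    have hys : (‖y‖⁻¹ • y) ∈ Metric.sphere (0 : X) 1 := by
      rw [mem_sphere_zero_iff_norm, norm_smul, norm_inv, norm_norm,
        inv_mul_cancel₀ (fun h => hy (norm_eq_zero.mp h))]
    obtain ⟨u, hu⟩ := hsurj ⟨‖y‖⁻¹ • y, hys⟩
    refine ⟨‖y‖ • (u : lp (fun _ : Γ => ℂ) ∞), ?_⟩
    have hun : ‖(u : lp (fun _ : Γ => ℂ) ∞)‖ = 1 := mem_sphere_zero_iff_norm.mp u.2
    have hy' : ‖y‖ ≠ 0 := fun h => hy (norm_eq_zero.mp h)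
    have hu0 : (u : lp (fun _ : Γ => ℂ) ∞) ≠ 0 := by
      intro h; rw [h, norm_zero] at hun; exact zero_ne_one hun
    have hx0 : ‖y‖ • (u : lp (fun _ : Γ => ℂ) ∞) ≠ 0 := smul_ne_zero hy' hu0
    have hnx : ‖‖y‖ • (u : lp (fun _ : Γ => ℂ) ∞)‖ = ‖y‖ := by
      rw [norm_smul, hun, Real.norm_eq_abs, abs_of_nonneg (norm_nonneg y), mul_one]
    rw [hF _ hx0]
    have hkey : (⟨‖‖y‖ • (u : lp (fun _ : Γ => ℂ) ∞)‖⁻¹ • ‖y‖ • (u : lp (fun _ : Γ => ℂ) ∞), by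
        rw [mem_sphere_zero_iff_norm, norm_smul, norm_inv, norm_norm,
          inv_mul_cancel₀ (fun h => hx0 (norm_eq_zero.mp h))]⟩ :
        Metric.sphere (0 : lp (fun _ : Γ => ℂ) ∞) 1) = u := by
      apply Subtype.ext
      show ‖‖y‖ • (u : lp (fun _ : Γ => ℂ) ∞)‖⁻¹ • ‖y‖ • (u : lp (fun _ : Γ => ℂ) ∞) = _
      rw [hnx, inv_smul_smul₀ hy']
    rw [hkey, hnx, hu]
    show ‖y‖ • (‖y‖⁻¹ • y) = y
    rw [smul_inv_smul₀ hy']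
  · -- isometry
    intro a b
    have : F a = F (a - b) + F b := by
      rw [← hadd, sub_add_cancel]
    rw [this, add_sub_cancel_right, hnormF]
  · -- extension
    intro x hx
    have hx1 : ‖x‖ = 1 := mem_sphere_zero_iff_norm.mp hx
    have hx0 : x ≠ 0 := by
      intro h; rw [h, norm_zero] at hx1; exact zero_ne_one hx1
    rw [hF x hx0]
    have hkey : (⟨‖x‖⁻¹ • x, by
        rw [mem_sphere_zero_iff_norm, norm_smul, norm_inv, norm_norm,
          inv_mul_cancel₀ (fun h => hx0 (norm_eq_zero.mp h))]⟩ :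
        Metric.sphere (0 : lp (fun _ : Γ => ℂ) ∞) 1) = ⟨x, hx⟩ := by
      apply Subtype.ext
      show ‖x‖⁻¹ • x = x
      rw [hx1, inv_one, one_smul]
    rw [hkey, hx1, one_smul]
end
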